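/- arXiv:2504.08289 — 4 statements merged into one kernel-verified Lean document; each statement's English description precedes it below -/
import Mathlib

section
/- Let s = 1/4 and let f : ℤ → ℝ be the indicator function of the singleton {1}. Then there exists a constant C > 0 such that for every integer x > 1, G(f)(x) ≥ C · (x−1)^{−3/4}, where G(f)(x) = (∫₀^∞ |∇(P_t f)|²(x) dt)^{1/2}. -/
open MeasureTheory Real

/-- The kernel `K_s` of the fractional discrete Laplacian on `ℤ`. -/
noncomputable def Ker (s : ℝ) (m : ℤ) : ℝ :=
  if m = 0 then 0
  else ((4 : ℝ) ^ s * Real.Gamma (1 / 2 + s) / (Real.sqrt Real.pi * |Real.Gamma (-s)|)) *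
    (Real.Gamma ((m.natAbs : ℝ) - s) / Real.Gamma ((m.natAbs : ℝ) + 1 + s))

/-- The fractional discrete Laplacian `L = (-Δ)^s` acting pointwise. -/
noncomputable def Lop (s : ℝ) (f : ℤ → ℝ) : ℤ → ℝ :=
  fun x => ∑' y : ℤ, (f x - f y) * Ker s (x - y)

/-- The heat semigroup `P_t = exp (-t L)`, given by the exponential series of the
bounded operator `-tL` (evaluated pointwise). -/
noncomputable def heat (s t : ℝ) (f : ℤ → ℝ) : ℤ → ℝ :=
  fun x => ∑' n : ℕ, ((-t) ^ n / (n.factorial : ℝ)) * ((Lop s)^[n] f x)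

/-- The squared modulus of the gradient, `|∇f|²(x) = Σ_y K_s(y-x) (f x - f y)²`. -/
noncomputable def gradSq (s : ℝ) (f : ℤ → ℝ) (x : ℤ) : ℝ :=
  ∑' y : ℤ, Ker s (y - x) * (f x - f y) ^ 2

/-- The squared modulus of the modified gradient,
`|∇̃f|²(x) = Σ_{y : |f y| < |f x|} K_s(y-x) (f x - f y)²`. -/
noncomputable def mgradSq (s : ℝ) (f : ℤ → ℝ) (x : ℤ) : ℝ :=
  ∑' y : {y : ℤ // |f y| < |f x|}, Ker s ((y : ℤ) - x) * (f x - f (y : ℤ)) ^ 2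

/-- The `ℓ^q` norm on `ℤ` with counting measure (for finite `q`). -/
noncomputable def lqNorm (q : ℝ) (f : ℤ → ℝ) : ℝ :=
  (∑' x : ℤ, |f x| ^ q) ^ (1 / q)

set_option maxHeartbeats 1000000
set_option synthInstance.maxHeartbeats 400000

noncomputable def Cst : ℝ :=
  (4 : ℝ) ^ ((1:ℝ)/4) * Real.Gamma (1 / 2 + 1/4) / (Real.sqrt Real.pi * |Real.Gamma (-(1/4))|)

lemma Cst_pos : 0 < Cst := by
  have h1 : (0:ℝ) < (4 : ℝ) ^ ((1:ℝ)/4) := Real.rpow_pos_of_pos (by norm_num) _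
  have h2 : 0 < Real.Gamma (1/2 + 1/4) := Real.Gamma_pos_of_pos (by norm_num)
  have h3 : 0 < Real.sqrt Real.pi := Real.sqrt_pos.2 Real.pi_pos
  have h4 : Real.Gamma (-(1/4)) ≠ 0 := by
    apply Real.Gamma_ne_zero
    intro m
    rcases m with _ | m
    · norm_num
    · intro h
      have h1 : ((m:ℝ) + 1) = 1/4 := by push_cast at h ⊢; linarith
      have h2 : (0:ℝ) ≤ (m:ℝ) := Nat.cast_nonneg _
      linarith
  have h4' : 0 < |Real.Gamma (-(1/4))| := abs_pos.2 h4
  exact div_pos (mul_pos h1 h2) (mul_pos h3 h4')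

/-- Log-convexity midpoint inequality for Gamma. -/
lemma Gamma_half_le (a : ℝ) (ha : 0 < a) : Real.Gamma (a + 1/2) ≤ Real.Gamma a * Real.sqrt a := by
  have hc := Real.convexOn_log_Gamma.2 (Set.mem_Ioi.2 ha) (Set.mem_Ioi.2 (by linarith : (0:ℝ) < a + 1))
      (by norm_num : (0:ℝ) ≤ (1/2:ℝ)) (by norm_num : (0:ℝ) ≤ (1/2:ℝ)) (by norm_num)
  simp only [smul_eq_mul, Function.comp_apply] at hc
  have e1 : 1/2 * a + 1/2 * (a+1) = a + 1/2 := by ring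
  rw [e1] at hc
  have hG1 : Real.Gamma (a+1) = a * Real.Gamma a := Real.Gamma_add_one (ne_of_gt ha)
  have hGa : 0 < Real.Gamma a := Real.Gamma_pos_of_pos ha
  have hGa2 : 0 < Real.Gamma (a+1/2) := Real.Gamma_pos_of_pos (by linarith)
  rw [hG1, Real.log_mul (ne_of_gt ha) (ne_of_gt hGa)] at hc
  have hlog : Real.log (Real.Gamma (a+1/2)) ≤ Real.log (Real.Gamma a * Real.sqrt a) := by
    rw [Real.log_mul (ne_of_gt hGa) (ne_of_gt (Real.sqrt_pos.2 ha)), Real.log_sqrt ha.le]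
    linarith
  exact (Real.log_le_log_iff hGa2 (mul_pos hGa (Real.sqrt_pos.2 ha))).1 hlog

lemma natAbs_cast_pos {m : ℤ} (hm : m ≠ 0) : (1:ℝ) ≤ (m.natAbs : ℝ) := by
  have : m.natAbs ≠ 0 := Int.natAbs_ne_zero.2 hm
  exact_mod_cast Nat.one_le_iff_ne_zero.2 this

lemma Ker_eq {m : ℤ} (hm : m ≠ 0) :
    Ker (1/4) m = Cst * (Real.Gamma ((m.natAbs : ℝ) - 1/4) / Real.Gamma ((m.natAbs : ℝ) + 1 + 1/4)) := by
  rw [Ker, if_neg hm, Cst]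

lemma Ker_zero : Ker (1/4) (0:ℤ) = 0 := by rw [Ker, if_pos rfl]

lemma Ker_neg (m : ℤ) : Ker (1/4) (-m) = Ker (1/4) m := by
  rw [Ker, Ker, Int.natAbs_neg]
  simp [neg_eq_zero]

lemma Ker_pos {m : ℤ} (hm : m ≠ 0) : 0 < Ker (1/4) m := by
  have hn := natAbs_cast_pos hm
  rw [Ker_eq hm]
  have h1 : 0 < Real.Gamma ((m.natAbs : ℝ) - 1/4) := Real.Gamma_pos_of_pos (by linarith)
  have h2 : 0 < Real.Gamma ((m.natAbs : ℝ) + 1 + 1/4) := Real.Gamma_pos_of_pos (by linarith)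
  exact mul_pos Cst_pos (div_pos h1 h2)

lemma Ker_nonneg (m : ℤ) : 0 ≤ Ker (1/4) m := by
  rcases eq_or_ne m 0 with h | h
  · rw [h, Ker_zero]
  · exact (Ker_pos h).le

lemma rpow_neg_three_halves {n : ℝ} (hn : 1 ≤ n) :
    n ^ (-(3/2) : ℝ) = 1 / (n * Real.sqrt n) := by
  have h0 : 0 < n := by linarith
  rw [Real.rpow_neg h0.le, one_div]
  congr 1
  rw [show (3/2 : ℝ) = 1 + 1/2 by norm_num, Real.rpow_add h0, Real.rpow_one,
    show Real.sqrt n = n ^ ((1:ℝ)/2) from Real.sqrt_eq_rpow n]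

lemma Ker_upper {m : ℤ} : Ker (1/4) m ≤ 2 * Cst * ((m.natAbs : ℝ)) ^ (-(3/2) : ℝ) := by
  rcases eq_or_ne m 0 with h | h
  · rw [h, Ker_zero]
    simp
  · have hn := natAbs_cast_pos h
    set n : ℝ := (m.natAbs : ℝ) with hndef
    have hn0 : 0 < n := by linarith
    set a : ℝ := n - 3/4 with hadef
    have ha : 0 < a := by simp only [hadef]; linarith
    have key : Real.Gamma (n - 1/4) ≤ Real.Gamma a * Real.sqrt a := by
      have h1 := Gamma_half_le a ha
      rw [show a + 1/2 = n - 1/4 by simp only [hadef]; ring] at h1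
      exact h1
    have hden : Real.Gamma (n + 1 + 1/4) = (a+1) * (a * Real.Gamma a) := by
      rw [show n + 1 + 1/4 = (a + 1) + 1 by simp only [hadef]; ring,
        Real.Gamma_add_one (by positivity), Real.Gamma_add_one (ne_of_gt ha)]
    have hGa : 0 < Real.Gamma a := Real.Gamma_pos_of_pos ha
    have hsa : 0 < Real.sqrt a := Real.sqrt_pos.2 ha
    have hsa2 : Real.sqrt a * Real.sqrt a = a := Real.mul_self_sqrt ha.le
    rw [Ker_eq h]
    have hratio : Real.Gamma (n - 1/4) / Real.Gamma (n + 1 + 1/4) ≤ 1 / ((a+1) * Real.sqrt a) := by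
      rw [hden, div_le_div_iff₀ (by positivity) (by positivity)]
      have := mul_le_mul_of_nonneg_right key (by positivity : (0:ℝ) ≤ (a+1) * Real.sqrt a)
      calc Real.Gamma (n - 1/4) * ((a+1) * Real.sqrt a)
          ≤ (Real.Gamma a * Real.sqrt a) * ((a+1) * Real.sqrt a) := this
        _ = (Real.sqrt a * Real.sqrt a) * ((a+1) * Real.Gamma a) := by ring
        _ = 1 * ((a+1) * (a * Real.Gamma a)) := by rw [hsa2]; ring
    have hbound : 1 / ((a+1) * Real.sqrt a) ≤ 2 * (n ^ (-(3/2) : ℝ)) := by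
      rw [rpow_neg_three_halves hn,
        show (2:ℝ) * (1 / (n * Real.sqrt n)) = 2 / (n * Real.sqrt n) by ring,
        div_le_div_iff₀ (by positivity) (by positivity)]
      have h1 : n ≤ a + 1 := by simp only [hadef]; linarith
      have h2 : Real.sqrt n ≤ 2 * Real.sqrt a := by
        rw [show (2:ℝ) * Real.sqrt a = Real.sqrt (2^2 * a) by
          rw [Real.sqrt_mul (by norm_num), Real.sqrt_sq (by norm_num)]]
        apply Real.sqrt_le_sqrt
        simp only [hadef]; linarith
      calc 1 * (n * Real.sqrt n) = n * Real.sqrt n := by ring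
        _ ≤ (a+1) * (2 * Real.sqrt a) := by
            apply mul_le_mul h1 h2 (Real.sqrt_nonneg _) (by positivity)
        _ = 2 * ((a+1) * Real.sqrt a) := by ring
    calc Cst * (Real.Gamma (n - 1/4) / Real.Gamma (n + 1 + 1/4))
        ≤ Cst * (1 / ((a+1) * Real.sqrt a)) := mul_le_mul_of_nonneg_left hratio Cst_pos.le
      _ ≤ Cst * (2 * (n ^ (-(3/2) : ℝ))) := mul_le_mul_of_nonneg_left hbound Cst_pos.le
      _ = 2 * Cst * n ^ (-(3/2) : ℝ) := by ring

lemma Ker_lower {m : ℤ} (h : m ≠ 0) :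
    Cst / Real.sqrt 2 * ((m.natAbs : ℝ)) ^ (-(3/2) : ℝ) ≤ Ker (1/4) m := by
  have hn := natAbs_cast_pos h
  set n : ℝ := (m.natAbs : ℝ) with hndef
  have hn0 : 0 < n := by linarith
  rw [Ker_eq h]
  have hG1 : 0 < Real.Gamma (n - 1/4) := Real.Gamma_pos_of_pos (by linarith)
  have hG2 : 0 < Real.Gamma (n + 1 + 1/4) := Real.Gamma_pos_of_pos (by linarith)
  have key : Real.Gamma (n + 1 + 1/4) ≤ (n - 1/4) * Real.Gamma (n - 1/4) * Real.sqrt (n + 3/4) := by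
    have h1 := Gamma_half_le (n + 3/4) (by linarith)
    rw [show n + 3/4 + 1/2 = n + 1 + 1/4 by ring] at h1
    have h2 : Real.Gamma (n + 3/4) = (n - 1/4) * Real.Gamma (n - 1/4) := by
      rw [show n + 3/4 = (n - 1/4) + 1 by ring,
        Real.Gamma_add_one (ne_of_gt (by linarith : (0:ℝ) < n - 1/4))]
    rw [h2] at h1
    exact h1
  have hp : 0 < (n - 1/4) * Real.sqrt (n + 3/4) :=
    mul_pos (by linarith) (Real.sqrt_pos.2 (by linarith))
  have hratio : 1 / ((n - 1/4) * Real.sqrt (n + 3/4)) ≤ Real.Gamma (n - 1/4) / Real.Gamma (n + 1 + 1/4) := by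
    rw [div_le_div_iff₀ hp hG2]
    calc 1 * Real.Gamma (n + 1 + 1/4) ≤ (n - 1/4) * Real.Gamma (n - 1/4) * Real.sqrt (n + 3/4) := by
          rw [one_mul]; exact key
      _ = Real.Gamma (n - 1/4) * ((n - 1/4) * Real.sqrt (n + 3/4)) := by ring
  have hbound : (1 / Real.sqrt 2) * n ^ (-(3/2) : ℝ) ≤ 1 / ((n - 1/4) * Real.sqrt (n + 3/4)) := by
    rw [rpow_neg_three_halves hn, div_mul_div_comm, one_mul,
      div_le_div_iff₀ (by positivity) hp]
    have h1 : n - 1/4 ≤ n := by linarith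
    have h2 : Real.sqrt (n + 3/4) ≤ Real.sqrt 2 * Real.sqrt n := by
      rw [← Real.sqrt_mul (by norm_num)]
      apply Real.sqrt_le_sqrt; linarith
    calc 1 * ((n - 1/4) * Real.sqrt (n + 3/4))
        ≤ 1 * (n * (Real.sqrt 2 * Real.sqrt n)) := by
          apply mul_le_mul_of_nonneg_left _ (by norm_num)
          apply mul_le_mul h1 h2 (Real.sqrt_nonneg _) hn0.le
      _ = 1 * (Real.sqrt 2 * (n * Real.sqrt n)) := by ring
  have hcomb := le_trans hbound hratio
  calc Cst / Real.sqrt 2 * n ^ (-(3/2) : ℝ) = Cst * ((1 / Real.sqrt 2) * n ^ (-(3/2) : ℝ)) := by ring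
    _ ≤ Cst * (Real.Gamma (n - 1/4) / Real.Gamma (n + 1 + 1/4)) :=
        mul_le_mul_of_nonneg_left hcomb Cst_pos.le

lemma Ker_summable : Summable (Ker (1/4)) := by
  apply Summable.of_nonneg_of_le Ker_nonneg (fun m => Ker_upper)
  have hnat : Summable (fun n : ℕ => 2 * Cst * ((n : ℝ)) ^ (-(3/2) : ℝ)) := by
    apply Summable.mul_left
    exact Real.summable_nat_rpow.2 (by norm_num)
  apply Summable.of_nat_of_neg
  · simpa using hnat
  · simpa [Int.natAbs_neg] using hnat

/-! ## Stage 2: the operator on ℓ² -/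



local notation "Hsp" => lp (fun _ : ℤ => ℝ) 2

noncomputable def Ksum : ℝ := ∑' m, Ker (1/4) m

lemma htp : (0:ℝ) < (2:ENNReal).toReal := by norm_num

lemma Hsp.sq_summable (f : Hsp) : Summable fun x => (f x : ℝ)^2 := by
  have h := (lp.memℓp f).summable htp
  refine h.congr fun x => ?_
  rw [show ((2:ENNReal).toReal) = ((2:ℕ):ℝ) by norm_num, Real.rpow_natCast]
  simp [sq_abs]

lemma Hsp.apply_le_norm (f : Hsp) (x : ℤ) : |f x| ≤ ‖f‖ :=
  lp.norm_apply_le_norm (by norm_num) f x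

lemma summable_ker_left (x : ℤ) : Summable fun y => Ker (1/4) (x - y) := by
  have h := (Equiv.subLeft x).summable_iff (f := Ker (1/4))
  exact h.2 Ker_summable

lemma tsum_ker_left (x : ℤ) : ∑' y, Ker (1/4) (x - y) = Ksum :=
  (Equiv.subLeft x).tsum_eq (Ker (1/4))

/-- Evaluation at a point as a continuous linear map. -/
noncomputable def evalCLM (x : ℤ) : Hsp →L[ℝ] ℝ :=
  LinearMap.mkContinuous
    { toFun := fun f => f x
      map_add' := fun f g => by
        have := congrFun (lp.coeFn_add f g) x
        simpa using this
      map_smul' := fun c f => by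
        have := congrFun (lp.coeFn_smul c f) x
        simpa using this } 1
    (fun f => by rw [one_mul, Real.norm_eq_abs]; exact Hsp.apply_le_norm f x)

@[simp] lemma evalCLM_apply (x : ℤ) (f : Hsp) : evalCLM x f = f x := rfl

lemma transl_mem (m : ℤ) (f : Hsp) : Memℓp (fun x : ℤ => (f (x - m) : ℝ)) 2 := by
  apply memℓp_gen
  have h := (lp.memℓp f).summable htp
  have h2 := ((Equiv.subRight m).summable_iff
    (f := fun x : ℤ => ‖(f x : ℝ)‖ ^ (2:ENNReal).toReal)).2 h
  exact h2.congr fun x => rfl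

/-- Translation of an `ℓ²` element. -/
noncomputable def transl (m : ℤ) (f : Hsp) : Hsp := ⟨fun x => f (x - m), transl_mem m f⟩

@[simp] lemma transl_apply (m : ℤ) (f : Hsp) (x : ℤ) : (transl m f) x = f (x - m) := rfl

lemma norm_transl (m : ℤ) (f : Hsp) : ‖transl m f‖ = ‖f‖ := by
  rw [lp.norm_eq_tsum_rpow htp, lp.norm_eq_tsum_rpow htp]
  congr 1
  exact (Equiv.subRight m).tsum_eq fun x => ‖(f x : ℝ)‖ ^ (2:ENNReal).toReal

lemma transl_add (m : ℤ) (f g : Hsp) : transl m (f + g) = transl m f + transl m g := by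
  apply lp.ext
  funext x
  have h1 := congrFun (lp.coeFn_add f g) (x - m)
  have h2 := congrFun (lp.coeFn_add (transl m f) (transl m g)) x
  simpa using h1.trans (by simpa using h2.symm)

lemma transl_smul (m : ℤ) (c : ℝ) (f : Hsp) : transl m (c • f) = c • transl m f := by
  apply lp.ext
  funext x
  have h1 := congrFun (lp.coeFn_smul c f) (x - m)
  have h2 := congrFun (lp.coeFn_smul c (transl m f)) x
  simpa using h1.trans (by simpa using h2.symm)

lemma norm_ker_smul_transl (f : Hsp) (m : ℤ) :
    ‖Ker (1/4) m • transl m f‖ = Ker (1/4) m * ‖f‖ := by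
  rw [norm_smul, norm_transl, Real.norm_eq_abs, abs_of_nonneg (Ker_nonneg m)]

lemma summable_transl (f : Hsp) : Summable fun m => Ker (1/4) m • transl m f := by
  apply Summable.of_norm_bounded (g := fun m => Ker (1/4) m * ‖f‖) (Ker_summable.mul_right _)
  intro m
  rw [norm_ker_smul_transl]

/-- Convolution with the kernel, as a linear map. -/
noncomputable def Tlin : Hsp →ₗ[ℝ] Hsp where
  toFun f := ∑' m, Ker (1/4) m • transl m f
  map_add' f g := by
    rw [← Summable.tsum_add (summable_transl f) (summable_transl g)]
    exact tsum_congr fun m => by rw [transl_add, smul_add]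
  map_smul' c f := by
    simp only [RingHom.id_apply]
    rw [← tsum_const_smul'' c]
    exact tsum_congr fun m => by rw [transl_smul, smul_comm]

noncomputable def Tc : Hsp →L[ℝ] Hsp :=
  LinearMap.mkContinuous Tlin Ksum (fun f => by
    have h1 : ‖Tlin f‖ ≤ ∑' m, ‖Ker (1/4) m • transl m f‖ := by
      apply norm_tsum_le_tsum_norm
      exact (Ker_summable.mul_right ‖f‖).congr fun m => (norm_ker_smul_transl f m).symm
    have h2 : ∑' m, ‖Ker (1/4) m • transl m f‖ = Ksum * ‖f‖ := by
      rw [tsum_congr (norm_ker_smul_transl f)]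
      exact tsum_mul_right
    exact h1.trans h2.le)

lemma Tc_apply (f : Hsp) (x : ℤ) : Tc f x = ∑' y, Ker (1/4) (x - y) * f y := by
  have h1 : (Tc f x : ℝ) = evalCLM x (∑' m, Ker (1/4) m • transl m f) := rfl
  rw [h1, ContinuousLinearMap.map_tsum _ (summable_transl f)]
  have h2 : ∀ m : ℤ, evalCLM x (Ker (1/4) m • transl m f) = Ker (1/4) m * f (x - m) := by
    intro m
    rw [_root_.map_smul]
    simp [smul_eq_mul]
  rw [tsum_congr h2]
  have h3 := (Equiv.subLeft x).tsum_eq (fun y => Ker (1/4) (x - y) * (f y : ℝ))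
  simp only [Equiv.subLeft_apply, sub_sub_cancel] at h3
  exact h3

/-- The fractional Laplacian as a continuous linear operator on `ℓ²`. -/
noncomputable def Aop : Hsp →L[ℝ] Hsp := Ksum • ContinuousLinearMap.id ℝ Hsp - Tc

lemma summable_ker_mul (f : Hsp) (x : ℤ) : Summable fun y => Ker (1/4) (x - y) * f y := by
  apply Summable.of_norm_bounded (g := fun y => Ker (1/4) (x - y) * ‖f‖)
    ((summable_ker_left x).mul_right _)
  intro y
  rw [norm_mul, Real.norm_eq_abs, Real.norm_eq_abs, abs_of_nonneg (Ker_nonneg _)]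
  exact mul_le_mul_of_nonneg_left (Hsp.apply_le_norm f y) (Ker_nonneg _)

lemma Aop_apply (f : Hsp) (x : ℤ) : Aop f x = Lop (1/4) (⇑f) x := by
  have hc : (Aop f x : ℝ) = Ksum * f x - Tc f x := by
    show (((Ksum • ContinuousLinearMap.id ℝ Hsp - Tc) f : Hsp) x : ℝ) = _
    rw [ContinuousLinearMap.sub_apply, ContinuousLinearMap.smul_apply]
    have h1 := congrFun (lp.coeFn_sub (Ksum • (ContinuousLinearMap.id ℝ Hsp) f) (Tc f)) x
    have h2 := congrFun (lp.coeFn_smul Ksum ((ContinuousLinearMap.id ℝ Hsp) f)) x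
    simp only [Pi.sub_apply] at h1
    rw [h1]
    simp only [Pi.smul_apply, smul_eq_mul] at h2
    rw [h2]
    rfl
  rw [hc, Tc_apply]
  rw [Lop]
  have hs1 : Summable fun y => (f x : ℝ) * Ker (1/4) (x - y) := (summable_ker_left x).mul_left _
  have hs2 : Summable fun y => (f y : ℝ) * Ker (1/4) (x - y) :=
    (summable_ker_mul f x).congr fun y => by ring
  symm
  calc ∑' y, ((f x : ℝ) - f y) * Ker (1/4) (x - y)
      = ∑' y, ((f x : ℝ) * Ker (1/4) (x - y) - (f y : ℝ) * Ker (1/4) (x - y)) :=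
        tsum_congr fun y => by ring
    _ = (∑' y, (f x : ℝ) * Ker (1/4) (x - y)) - ∑' y, (f y : ℝ) * Ker (1/4) (x - y) :=
        Summable.tsum_sub hs1 hs2
    _ = Ksum * f x - ∑' y, Ker (1/4) (x - y) * (f y : ℝ) := by
        rw [tsum_mul_left, tsum_ker_left]
        congr 1
        · exact mul_comm _ _
        · exact tsum_congr fun y => mul_comm _ _

lemma Aop_coeFn (f : Hsp) : ⇑(Aop f) = Lop (1/4) (⇑f) := funext (Aop_apply f)

lemma Aop_iter (n : ℕ) : ∀ (f : Hsp) (x : ℤ), ((Aop ^ n) f) x = (Lop (1/4))^[n] (⇑f) x := by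
  induction n with
  | zero => intro f x; simp
  | succ n ih =>
    intro f x
    rw [pow_succ, ContinuousLinearMap.mul_apply, Function.iterate_succ_apply]
    calc ((Aop ^ n) (Aop f)) x = (Lop (1/4))^[n] (⇑(Aop f)) x := ih (Aop f) x
      _ = (Lop (1/4))^[n] (Lop (1/4) ⇑f) x := by rw [Aop_coeFn f]

/-! ## Stage 3: the heat semigroup via the exponential -/


noncomputable def Uop (t : ℝ) : Hsp →L[ℝ] Hsp := NormedSpace.exp (t • (-Aop))

lemma smul_apply_coord (c : ℝ) (Φ : Hsp →L[ℝ] Hsp) (g : Hsp) (x : ℤ) :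
    ((c • Φ) g) x = c * (Φ g x) := by
  rw [ContinuousLinearMap.smul_apply]
  have := congrFun (lp.coeFn_smul c (Φ g)) x
  simpa using this

lemma Uop_apply (t : ℝ) (g : Hsp) (x : ℤ) :
    (Uop t g) x = ∑' n : ℕ, ((-t)^n / (n.factorial:ℝ)) * ((Lop (1/4))^[n] (⇑g) x) := by
  have hsum := NormedSpace.expSeries_summable' (𝕂 := ℝ) (t • (-Aop))
  have h1 : Uop t = ∑' n : ℕ, ((n.factorial:ℝ))⁻¹ • (t • (-Aop))^n := by
    rw [Uop, NormedSpace.exp_eq_tsum ℝ]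
  have h2 : (Uop t) g = ∑' n : ℕ, (((n.factorial:ℝ))⁻¹ • (t • (-Aop))^n) g := by
    rw [h1]
    exact ContinuousLinearMap.map_tsum (ContinuousLinearMap.apply ℝ Hsp g) hsum
  have hsum2 : Summable fun n : ℕ => (((n.factorial:ℝ))⁻¹ • (t • (-Aop))^n) g :=
    hsum.mapL (ContinuousLinearMap.apply ℝ Hsp g)
  have h3 : (Uop t g) x = ∑' n : ℕ, ((((n.factorial:ℝ))⁻¹ • (t • (-Aop))^n) g) x := by
    rw [h2]
    exact ContinuousLinearMap.map_tsum (evalCLM x) hsum2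
  rw [h3]
  refine tsum_congr fun n => ?_
  have e1 : (t • (-Aop))^n = (-t)^n • Aop^n := by
    rw [show t • (-Aop) = (-t) • Aop by rw [smul_neg, neg_smul], smul_pow]
  rw [e1, smul_apply_coord, smul_apply_coord, Aop_iter n g x]
  rw [div_eq_inv_mul]
  ring

noncomputable def f0 : Hsp := lp.single 2 (1 : ℤ) (1 : ℝ)

lemma f0_apply (y : ℤ) : (f0 y : ℝ) = if y = 1 then 1 else 0 := by
  rw [f0, lp.single_apply]
  split_ifs with h <;> simp [h]

lemma coe_f0 : (⇑f0 : ℤ → ℝ) = fun y : ℤ => if y = 1 then (1:ℝ) else 0 := funext f0_apply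

lemma heat_eq (t : ℝ) (x : ℤ) :
    heat (1/4) t (fun y : ℤ => if y = 1 then (1:ℝ) else 0) x = (Uop t f0) x := by
  rw [Uop_apply, ← coe_f0, heat]

lemma Uop_hasDerivAt (g : Hsp) (t : ℝ) :
    HasDerivAt (fun τ => Uop τ g) (-(Aop (Uop t g))) t := by
  have h := hasDerivAt_exp_smul_const (𝕂 := ℝ) (-Aop) t
  have hev := ((ContinuousLinearMap.apply ℝ Hsp g).hasFDerivAt.comp_hasDerivAt t h)
  have hcomm : (-Aop) * NormedSpace.exp (t • (-Aop)) = NormedSpace.exp (t • (-Aop)) * (-Aop) :=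
    ((Commute.refl (-Aop)).smul_right t).exp_right |>.eq
  have heq : (ContinuousLinearMap.apply ℝ Hsp g) (NormedSpace.exp (t • (-Aop)) * (-Aop))
      = -(Aop (Uop t g)) := by
    rw [← hcomm]
    show ((-Aop) * NormedSpace.exp (t • (-Aop))) g = _
    rw [ContinuousLinearMap.mul_apply, ContinuousLinearMap.neg_apply]
    rfl
  rw [heq] at hev
  exact hev

lemma Uop_cont (g : Hsp) : Continuous fun t => Uop t g := by
  apply continuous_iff_continuousAt.2
  intro t
  exact (Uop_hasDerivAt g t).continuousAt

lemma Uop_zero (g : Hsp) : Uop 0 g = g := by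
  rw [Uop, zero_smul, NormedSpace.exp_zero]
  rfl

/-! ## Stage 4: the Dirichlet form identity -/


lemma Ker_symm (a b : ℤ) : Ker (1/4) (a - b) = Ker (1/4) (b - a) := by
  rw [show a - b = -(b - a) by ring, Ker_neg]

/-- The quadratic form at a point, with kernel written as `K (x - y)`. -/
noncomputable def Fq (g : lp (fun _ : ℤ => ℝ) 2) (x : ℤ) : ℝ :=
  ∑' y : ℤ, Ker (1/4) (x - y) * ((g x : ℝ) - g y) ^ 2

lemma gradSq_coe_eq (g : Hsp) (x : ℤ) : gradSq (1/4) (⇑g) x = Fq g x :=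
  tsum_congr fun y => by rw [Ker_symm y x]

lemma sq_diff_le (g : Hsp) (x y : ℤ) : ((g x : ℝ) - g y)^2 ≤ 4 * ‖g‖^2 := by
  have hx := abs_le.1 (Hsp.apply_le_norm g x)
  have hy := abs_le.1 (Hsp.apply_le_norm g y)
  nlinarith [hx.1, hx.2, hy.1, hy.2]

lemma summable_gradSq_inner (g : Hsp) (x : ℤ) :
    Summable fun y => Ker (1/4) (x - y) * ((g x : ℝ) - g y) ^ 2 := by
  apply Summable.of_nonneg_of_le
    (fun y => mul_nonneg (Ker_nonneg _) (sq_nonneg _))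
    (fun y => mul_le_mul_of_nonneg_left (sq_diff_le g x y) (Ker_nonneg _))
    ((summable_ker_left x).mul_right _)

lemma summable_pker (g : Hsp) :
    Summable fun p : ℤ × ℤ => Ker (1/4) (p.1 - p.2) * (((g p.1 : ℝ))^2 + ((g p.2 : ℝ))^2) := by
  have hPa : Summable fun p : ℤ × ℤ => Ker (1/4) (p.1 - p.2) * ((g p.1 : ℝ))^2 := by
    rw [summable_prod_of_nonneg (fun p => mul_nonneg (Ker_nonneg _) (sq_nonneg _))]
    constructor
    · intro x
      simpa using (summable_ker_left x).mul_right ((g x : ℝ)^2)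
    · have h1 : (fun x => ∑' y, Ker (1/4) (x - y) * ((g x : ℝ))^2)
          = fun x => Ksum * ((g x : ℝ))^2 := by
        funext x
        rw [tsum_mul_right, tsum_ker_left]
      rw [h1]
      exact (Hsp.sq_summable g).mul_left Ksum
  have hPb : Summable fun p : ℤ × ℤ => Ker (1/4) (p.1 - p.2) * ((g p.2 : ℝ))^2 := by
    have h2 := ((Equiv.prodComm ℤ ℤ).summable_iff
      (f := fun p : ℤ × ℤ => Ker (1/4) (p.1 - p.2) * ((g p.1 : ℝ))^2)).2 hPa
    apply h2.congr
    intro p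
    show Ker (1/4) (p.2 - p.1) * ((g p.2 : ℝ))^2 = _
    rw [Ker_symm]
  exact (hPa.add hPb).congr fun p => by ring

lemma summable_double (g : Hsp) :
    Summable fun p : ℤ × ℤ => Ker (1/4) (p.1 - p.2) * ((g p.1 : ℝ) - g p.2)^2 := by
  apply Summable.of_nonneg_of_le
    (fun p => mul_nonneg (Ker_nonneg _) (sq_nonneg _))
    (fun p => ?_) ((summable_pker g).mul_left 2)
  have h1 : ((g p.1 : ℝ) - g p.2)^2 ≤ 2 * (((g p.1 : ℝ))^2 + ((g p.2 : ℝ))^2) := by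
    nlinarith [sq_nonneg ((g p.1 : ℝ) + g p.2)]
  calc Ker (1/4) (p.1 - p.2) * ((g p.1 : ℝ) - g p.2)^2
      ≤ Ker (1/4) (p.1 - p.2) * (2 * (((g p.1 : ℝ))^2 + ((g p.2 : ℝ))^2)) :=
        mul_le_mul_of_nonneg_left h1 (Ker_nonneg _)
    _ = 2 * (Ker (1/4) (p.1 - p.2) * (((g p.1 : ℝ))^2 + ((g p.2 : ℝ))^2)) := by ring

/-- `P1 p = K(p₁-p₂) * (g p₁ * (g p₁ - g p₂))`. -/
noncomputable def P1 (g : Hsp) (p : ℤ × ℤ) : ℝ :=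
  Ker (1/4) (p.1 - p.2) * ((g p.1 : ℝ) * ((g p.1 : ℝ) - g p.2))

noncomputable def P2 (g : Hsp) (p : ℤ × ℤ) : ℝ :=
  Ker (1/4) (p.1 - p.2) * ((g p.2 : ℝ) * ((g p.1 : ℝ) - g p.2))

lemma abs_cross_le (a b : ℝ) : |a * (a - b)| ≤ 2 * (a^2 + b^2) := by
  rw [abs_mul]
  have h1 : |a - b| ≤ |a| + |b| := abs_sub a b
  have h2 : |a| * |a - b| ≤ |a| * (|a| + |b|) :=
    mul_le_mul_of_nonneg_left h1 (abs_nonneg _)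
  nlinarith [sq_abs a, sq_abs b, sq_nonneg (|a| - |b|), abs_nonneg a, abs_nonneg b]

lemma summable_P1 (g : Hsp) : Summable (P1 g) := by
  have hb := (summable_pker g).mul_left 2
  apply Summable.of_norm_bounded hb
  intro p
  unfold P1
  rw [norm_mul, Real.norm_eq_abs, Real.norm_eq_abs, abs_of_nonneg (Ker_nonneg _)]
  calc Ker (1/4) (p.1 - p.2) * |(g p.1 : ℝ) * ((g p.1 : ℝ) - g p.2)|
      ≤ Ker (1/4) (p.1 - p.2) * (2 * (((g p.1 : ℝ))^2 + ((g p.2 : ℝ))^2)) :=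
        mul_le_mul_of_nonneg_left (abs_cross_le _ _) (Ker_nonneg _)
    _ = 2 * (Ker (1/4) (p.1 - p.2) * (((g p.1 : ℝ))^2 + ((g p.2 : ℝ))^2)) := by ring

lemma summable_P2 (g : Hsp) : Summable (P2 g) := by
  apply ((Equiv.prodComm ℤ ℤ).summable_iff (f := P2 g)).1
  have : (P2 g ∘ (Equiv.prodComm ℤ ℤ)) = fun p : ℤ × ℤ => -(P1 g p) := by
    funext p
    show Ker (1/4) (p.2 - p.1) * ((g p.1 : ℝ) * ((g p.2 : ℝ) - g p.1)) = _
    rw [Ker_symm]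
    unfold P1
    ring
  rw [this]
  exact (summable_P1 g).neg

lemma tsum_P2_eq (g : Hsp) : ∑' p : ℤ × ℤ, P2 g p = -∑' p : ℤ × ℤ, P1 g p := by
  rw [← (Equiv.prodComm ℤ ℤ).tsum_eq (P2 g)]
  have : (fun p : ℤ × ℤ => P2 g ((Equiv.prodComm ℤ ℤ) p)) = fun p : ℤ × ℤ => -(P1 g p) := by
    funext p
    show Ker (1/4) (p.2 - p.1) * ((g p.1 : ℝ) * ((g p.2 : ℝ) - g p.1)) = _
    rw [Ker_symm]
    unfold P1
    ring
  rw [this, tsum_neg]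

lemma summable_P1_inner (g : Hsp) (x : ℤ) : Summable fun y => P1 g (x, y) := by
  exact (summable_P1 g).prod_factor x

lemma summable_P2_inner (g : Hsp) (x : ℤ) : Summable fun y => P2 g (x, y) := by
  exact (summable_P2 g).prod_factor x

lemma Fq_split (g : Hsp) (x : ℤ) :
    Fq g x = (∑' y, P1 g (x, y)) - ∑' y, P2 g (x, y) := by
  rw [← Summable.tsum_sub (summable_P1_inner g x) (summable_P2_inner g x)]
  exact tsum_congr fun y => by unfold P1 P2; ring

lemma inner_real (a b : ℝ) : (inner ℝ a b : ℝ) = a * b := by simp [mul_comm]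

lemma inner_Aop_eq_P1 (g : Hsp) : (inner ℝ (Aop g) g : ℝ) = ∑' p : ℤ × ℤ, P1 g p := by
  rw [lp.inner_eq_tsum]
  have h1 : ∀ x : ℤ, (inner ℝ ((Aop g) x : ℝ) ((g x : ℝ)) : ℝ) = ∑' y, P1 g (x, y) := by
    intro x
    rw [inner_real, Aop_apply, Lop]
    rw [← tsum_mul_right]
    exact tsum_congr fun y => by unfold P1; ring
  rw [tsum_congr h1]
  exact ((summable_P1 g).hasSum.prod_fiberwise
    (fun x => ((summable_P1 g).prod_factor x).hasSum)).tsum_eq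

lemma summable_Fq (g : Hsp) : Summable (Fq g) := by
  have h := ((summable_double g).hasSum.prod_fiberwise
    (fun x => ((summable_double g).prod_factor x).hasSum)).summable
  exact h

lemma tsum_Fq_eq (g : Hsp) : ∑' x, Fq g x = 2 * (inner ℝ (Aop g) g : ℝ) := by
  have hsum1 : Summable fun x => ∑' y, P1 g (x, y) :=
    ((summable_P1 g).hasSum.prod_fiberwise
      (fun x => ((summable_P1 g).prod_factor x).hasSum)).summable
  have hsum2 : Summable fun x => ∑' y, P2 g (x, y) :=
    ((summable_P2 g).hasSum.prod_fiberwise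
      (fun x => ((summable_P2 g).prod_factor x).hasSum)).summable
  have h1 : ∑' x, Fq g x = (∑' x, ∑' y, P1 g (x, y)) - ∑' x, ∑' y, P2 g (x, y) := by
    rw [← Summable.tsum_sub hsum1 hsum2]
    exact tsum_congr fun x => Fq_split g x
  rw [h1,
    ((summable_P1 g).hasSum.prod_fiberwise
      (fun x => ((summable_P1 g).prod_factor x).hasSum)).tsum_eq,
    ((summable_P2 g).hasSum.prod_fiberwise
      (fun x => ((summable_P2 g).prod_factor x).hasSum)).tsum_eq,
    tsum_P2_eq, inner_Aop_eq_P1]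
  ring

lemma Fq_nonneg (g : Hsp) (x : ℤ) : 0 ≤ Fq g x :=
  tsum_nonneg fun y => mul_nonneg (Ker_nonneg _) (sq_nonneg _)

lemma Fq_le_inner (g : Hsp) (x : ℤ) : Fq g x ≤ 2 * (inner ℝ (Aop g) g : ℝ) := by
  rw [← tsum_Fq_eq]
  exact Summable.le_tsum (summable_Fq g) x fun y _ => Fq_nonneg g y

lemma inner_Aop_nonneg (g : Hsp) : 0 ≤ (inner ℝ (Aop g) g : ℝ) := by
  have h := tsum_Fq_eq g
  have h2 : 0 ≤ ∑' x, Fq g x := tsum_nonneg (Fq_nonneg g)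
  linarith

/-! ## Stage 5: energy identity and integrability -/

noncomputable def uu (t : ℝ) : Hsp := Uop t f0
noncomputable def Ef (t : ℝ) : ℝ := inner ℝ (uu t) (uu t)
noncomputable def psi (t : ℝ) : ℝ := 2 * (inner ℝ (Aop (uu t)) (uu t) : ℝ)

lemma Ef_hasDerivAt (t : ℝ) : HasDerivAt Ef (-psi t) t := by
  have hu := Uop_hasDerivAt f0 t
  have h := hu.inner ℝ hu
  have h2 : (inner ℝ (Uop t f0) (-(Aop (Uop t f0))) + inner ℝ (-(Aop (Uop t f0))) (Uop t f0) : ℝ)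
      = -psi t := by
    have e1 : (inner ℝ (Uop t f0) (-(Aop (Uop t f0))) : ℝ) = -(inner ℝ (Uop t f0) (Aop (Uop t f0))) :=
      inner_neg_right _ _
    have e2 : (inner ℝ (-(Aop (Uop t f0))) (Uop t f0) : ℝ) = -(inner ℝ (Aop (Uop t f0)) (Uop t f0)) :=
      inner_neg_left _ _
    have e3 : (inner ℝ (Uop t f0) (Aop (Uop t f0)) : ℝ) = inner ℝ (Aop (Uop t f0)) (Uop t f0) :=
      real_inner_comm _ _
    simp only [psi, uu]
    rw [e1, e2, e3]
    ring
  rw [h2] at h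
  exact h

lemma uu_cont : Continuous uu := Uop_cont f0

lemma psi_cont : Continuous psi := by
  apply Continuous.mul continuous_const
  exact Continuous.inner (Aop.continuous.comp uu_cont) uu_cont

lemma psi_nonneg (t : ℝ) : 0 ≤ psi t := by
  have := inner_Aop_nonneg (uu t)
  rw [psi]; linarith

lemma Ef_nonneg (t : ℝ) : 0 ≤ Ef t := real_inner_self_nonneg

lemma integral_psi (a b : ℝ) : ∫ t in a..b, psi t = Ef a - Ef b := by
  have h1 : ∀ x ∈ Set.uIcc a b, HasDerivAt Ef (-psi x) x := fun x _ => Ef_hasDerivAt x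
  have h2 : IntervalIntegrable (fun t => -psi t) MeasureTheory.volume a b :=
    (psi_cont.neg).intervalIntegrable a b
  have h3 := intervalIntegral.integral_eq_sub_of_hasDerivAt h1 h2
  have h4 : ∫ t in a..b, -psi t = -∫ t in a..b, psi t := intervalIntegral.integral_neg
  rw [h4] at h3
  linarith

lemma Ef_le (a : ℝ) (ha : 0 ≤ a) : Ef a ≤ Ef 0 := by
  have h1 := integral_psi 0 a
  have h2 : 0 ≤ ∫ t in (0:ℝ)..a, psi t :=
    intervalIntegral.integral_nonneg ha fun x _ => psi_nonneg x
  linarith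

lemma psi_integrableOn : IntegrableOn psi (Set.Ioi (0:ℝ)) := by
  apply integrableOn_Ioi_of_intervalIntegral_norm_bounded (l := Filter.atTop) (Ef 0) 0 (b := fun n : ℕ => (n:ℝ))
  · intro n
    exact (psi_cont.integrableOn_Ioc)
  · exact tendsto_natCast_atTop_atTop
  · apply Filter.Eventually.of_forall
    intro n
    have hcongr : ∫ t in (0:ℝ)..(n:ℝ), ‖psi t‖ = ∫ t in (0:ℝ)..(n:ℝ), psi t := by
      apply intervalIntegral.integral_congr
      intro x _
      exact Real.norm_of_nonneg (psi_nonneg x)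
    rw [hcongr, integral_psi]
    have := Ef_nonneg (n:ℝ)
    linarith

lemma cont_eval (x : ℤ) : Continuous fun t => (uu t x : ℝ) :=
  (evalCLM x).continuous.comp uu_cont

lemma gq_meas (x₀ : ℤ) : AEStronglyMeasurable (fun t => Fq (uu t) x₀)
    (MeasureTheory.volume.restrict (Set.Ioi (0:ℝ))) := by
  set E : ℕ ≃ ℤ := (Denumerable.eqv ℤ).symm with hE
  set S : ℕ → ℝ → ℝ := fun N t =>
    ∑ i ∈ Finset.range N, Ker (1/4) (x₀ - E i) * ((uu t x₀ : ℝ) - uu t (E i))^2 with hS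
  have hScont : ∀ N, Continuous (S N) := by
    intro N
    apply continuous_finset_sum
    intro i _
    exact Continuous.mul continuous_const (((cont_eval x₀).sub (cont_eval (E i))).pow 2)
  have htend : ∀ t, Filter.Tendsto (fun N => S N t) Filter.atTop (nhds (Fq (uu t) x₀)) := by
    intro t
    have hs : HasSum (fun y => Ker (1/4) (x₀ - y) * ((uu t x₀ : ℝ) - uu t y)^2) (Fq (uu t) x₀) :=
      (summable_gradSq_inner (uu t) x₀).hasSum
    have hs2 : HasSum (fun n : ℕ => Ker (1/4) (x₀ - E n) * ((uu t x₀ : ℝ) - uu t (E n))^2)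
        (Fq (uu t) x₀) := (Equiv.hasSum_iff E).2 hs
    exact hs2.tendsto_sum_nat
  exact aestronglyMeasurable_of_tendsto_ae Filter.atTop
    (fun N => ((hScont N).aestronglyMeasurable))
    (Filter.Eventually.of_forall fun t => htend t)

lemma gq_integrableOn (x₀ : ℤ) : IntegrableOn (fun t => Fq (uu t) x₀) (Set.Ioi (0:ℝ)) := by
  apply Integrable.mono' psi_integrableOn (gq_meas x₀)
  apply Filter.Eventually.of_forall
  intro t
  rw [Real.norm_of_nonneg (Fq_nonneg _ _)]
  have := Fq_le_inner (uu t) x₀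
  rw [psi]
  linarith

/-! ## Stage 6: main theorem -/



/-- Counterexample lower bound: for `s = 1/4` and `f` the indicator of `{1}`, there is
`C > 0` with `G f x ≥ C (x-1)^{-3/4}` for every integer `x > 1`. -/
theorem counterexample_lower_bound :
    ∃ C : ℝ, 0 < C ∧ ∀ x : ℤ, 1 < x →
      C * ((x : ℝ) - 1) ^ (-(3 / 4 : ℝ)) ≤
        Real.sqrt (∫ t in Set.Ioi (0 : ℝ),
          gradSq (1 / 4) (heat (1 / 4) t (fun y : ℤ => if y = 1 then (1 : ℝ) else 0)) x) := by
  classical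
  obtain ⟨δ, hδpos, hδ⟩ := Metric.continuousAt_iff.1 (uu_cont.continuousAt (x := 0)) (1/4)
    (by norm_num)
  set t0 : ℝ := δ/2 with ht0
  have ht0pos : 0 < t0 := by positivity
  have hnear : ∀ t ∈ Set.Ioc (0:ℝ) t0, ‖uu t - f0‖ ≤ 1/4 := by
    intro t ht
    have hd : dist t 0 < δ := by
      rw [Real.dist_eq, sub_zero, abs_of_pos ht.1]
      have := ht.2
      simp only [ht0] at this
      linarith
    have h2 := hδ hd
    rw [dist_eq_norm] at h2
    have h3 : uu 0 = f0 := Uop_zero f0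
    rw [h3] at h2
    exact h2.le
  have hCstp := Cst_pos
  have hs2 : (0:ℝ) < Real.sqrt 2 := Real.sqrt_pos.2 (by norm_num)
  set C : ℝ := Real.sqrt (t0 * (Cst / Real.sqrt 2) / 4) with hCdef
  refine ⟨C, ?_, ?_⟩
  · apply Real.sqrt_pos.2
    positivity
  intro x hx
  set n : ℝ := (x:ℝ) - 1 with hndef
  have hn1 : (1:ℝ) ≤ n := by
    have : (2:ℝ) ≤ (x:ℝ) := by exact_mod_cast hx
    simp only [hndef]; linarith
  have hn0 : (0:ℝ) ≤ n := by linarith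
  have hx1 : x ≠ 1 := by omega
  have hKx : Cst / Real.sqrt 2 * n ^ (-(3/2):ℝ) ≤ Ker (1/4) (x - 1) := by
    have hm : x - 1 ≠ 0 := by omega
    have hlow := Ker_lower hm
    have hcast : (((x-1:ℤ).natAbs : ℝ)) = n := by
      rw [Nat.cast_natAbs]
      rw [abs_of_nonneg (by omega : (0:ℤ) ≤ x - 1)]
      push_cast
      simp [hndef]
    rwa [hcast] at hlow
  have hlowt : ∀ t ∈ Set.Ioc (0:ℝ) t0, Ker (1/4) (x-1) * (1/4) ≤ Fq (uu t) x := by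
    intro t ht
    have hterm : Ker (1/4) (x - 1) * ((uu t x : ℝ) - uu t 1)^2 ≤ Fq (uu t) x :=
      Summable.le_tsum (summable_gradSq_inner (uu t) x) 1
        (fun y _ => mul_nonneg (Ker_nonneg _) (sq_nonneg _))
    have hnorm := hnear t ht
    have hcoord : ∀ y : ℤ, |(uu t y : ℝ) - f0 y| ≤ 1/4 := by
      intro y
      have h1 := Hsp.apply_le_norm (uu t - f0) y
      have h2 := congrFun (lp.coeFn_sub (uu t) f0) y
      simp only [Pi.sub_apply] at h2
      rw [h2] at h1
      linarith
    have hcx := hcoord x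
    have hc1 := hcoord 1
    rw [f0_apply, if_neg hx1] at hcx
    rw [f0_apply, if_pos rfl] at hc1
    have hsq : (1/4 : ℝ) ≤ ((uu t x : ℝ) - uu t 1)^2 := by
      have h1 := abs_le.1 hcx
      have h2 := abs_le.1 hc1
      nlinarith [sq_nonneg ((uu t x : ℝ) - uu t 1 + 1/2)]
    calc Ker (1/4) (x-1) * (1/4) ≤ Ker (1/4) (x-1) * ((uu t x : ℝ) - uu t 1)^2 :=
          mul_le_mul_of_nonneg_left hsq (Ker_nonneg _)
      _ ≤ Fq (uu t) x := hterm
  have hIoc : IntegrableOn (fun t => Fq (uu t) x) (Set.Ioc (0:ℝ) t0) :=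
    (gq_integrableOn x).mono_set Set.Ioc_subset_Ioi_self
  have hI1 : t0 * (Ker (1/4) (x-1) * (1/4)) ≤ ∫ t in Set.Ioc (0:ℝ) t0, Fq (uu t) x := by
    have hconst : ∫ _t in Set.Ioc (0:ℝ) t0, (Ker (1/4) (x-1) * (1/4))
        = t0 * (Ker (1/4) (x-1) * (1/4)) := by
      rw [MeasureTheory.setIntegral_const, Real.volume_real_Ioc_of_le ht0pos.le, smul_eq_mul]
      ring_nf
    rw [← hconst]
    apply MeasureTheory.setIntegral_mono_on
      ((MeasureTheory.integrableOn_const_iff enorm_ne_top).2 (Or.inr measure_Ioc_lt_top)) hIoc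
      measurableSet_Ioc hlowt
  have hI2 : ∫ t in Set.Ioc (0:ℝ) t0, Fq (uu t) x ≤ ∫ t in Set.Ioi (0:ℝ), Fq (uu t) x := by
    apply MeasureTheory.setIntegral_mono_set (gq_integrableOn x)
      (Filter.Eventually.of_forall fun t => Fq_nonneg _ _)
      (Set.Ioc_subset_Ioi_self).eventuallyLE
  have hfun : (fun t => gradSq (1/4) (heat (1/4) t (fun y : ℤ => if y = 1 then (1:ℝ) else 0)) x)
      = fun t => Fq (uu t) x := by
    funext t
    rw [show heat (1/4) t (fun y : ℤ => if y = 1 then (1:ℝ) else 0) = ⇑(uu t) from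
      funext fun z => heat_eq t z, gradSq_coe_eq]
  rw [hfun]
  have hfinal : t0 * (Ker (1/4) (x-1) * (1/4)) ≤ ∫ t in Set.Ioi (0:ℝ), Fq (uu t) x :=
    le_trans hI1 hI2
  have hnr : (0:ℝ) ≤ n ^ (-(3/2):ℝ) := Real.rpow_nonneg hn0 _
  have hmid : t0 * (Cst / Real.sqrt 2) / 4 * n ^ (-(3/2):ℝ) ≤ t0 * (Ker (1/4) (x-1) * (1/4)) := by
    have h1 : Cst / Real.sqrt 2 * n ^ (-(3/2):ℝ) ≤ Ker (1/4) (x-1) := hKx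
    nlinarith [ht0pos.le]
  have hsqrtn : Real.sqrt (n ^ (-(3/2):ℝ)) = n ^ (-(3/4):ℝ) := by
    rw [Real.sqrt_eq_rpow, ← Real.rpow_mul hn0]
    norm_num
  calc C * n ^ (-(3/4):ℝ)
      = Real.sqrt (t0 * (Cst / Real.sqrt 2) / 4) * Real.sqrt (n ^ (-(3/2):ℝ)) := by
        rw [hCdef, hsqrtn]
    _ = Real.sqrt (t0 * (Cst / Real.sqrt 2) / 4 * n ^ (-(3/2):ℝ)) :=
        (Real.sqrt_mul (by positivity) _).symm
    _ ≤ Real.sqrt (∫ t in Set.Ioi (0:ℝ), Fq (uu t) x) :=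
        Real.sqrt_le_sqrt (le_trans hmid hfinal)
end

section
/- Let q ∈ (1,2]. For every summable f : ℤ → ℝ with f ≥ 0 and every x ∈ ℤ, Γ_q(f)(x) = q(q−1) Σ_{y∈ℤ} K_s(x−y) (f(x)−f(y))² ∫₀¹ (1−u)·f(x)^{2−q} / ((1−u)f(x) + u f(y))^{2−q} du. -/
open MeasureTheory Real

/-- The pseudo-gradient `Γ_q(f) = q f · L f - f^{2-q} · L (f^q)` (real powers). -/
noncomputable def GammaQ (s q : ℝ) (f : ℤ → ℝ) : ℤ → ℝ :=
  fun x => q * f x * Lop s f x - f x ^ (2 - q) * Lop s (fun y => f y ^ q) x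


section Aux
open intervalIntegral

lemma gamma_ratio_le {s : ℝ} (hs0 : 0 < s) (hs1 : s < 1) (n : ℕ) :
    Real.Gamma ((n + 1 : ℝ) - s) / Real.Gamma ((n + 1 : ℝ) + 1 + s)
      ≤ (Real.Gamma (1 - s) / Real.Gamma (2 + s)) * ((n + 1 : ℝ)) ^ (-(1 + s)) := by
  induction n with
  | zero =>
    have h1 : ((0 : ℕ) + 1 : ℝ) = 1 := by norm_num
    have h2 : (1 : ℝ) + 1 + s = 2 + s := by ring
    rw [h1, h2, Real.one_rpow, mul_one]
  | succ n ih =>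
    set x : ℝ := (n + 1 : ℝ) with hx
    have hxpos : (0 : ℝ) < x := by positivity
    have hxs : 0 < x - s := by
      have : (1:ℝ) ≤ x := by rw [hx]; linarith [Nat.cast_nonneg (α := ℝ) n]
      linarith
    have hx1s : 0 < x + 1 + s := by linarith
    have hx1pos : (0:ℝ) < x + 1 := by linarith
    have hR : 0 < Real.Gamma (1 - s) / Real.Gamma (2 + s) :=
      div_pos (Real.Gamma_pos_of_pos (by linarith)) (Real.Gamma_pos_of_pos (by linarith))
    have e1 : ((n + 1 : ℕ) + 1 : ℝ) - s = (x - s) + 1 := by push_cast; ring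
    have e2 : ((n + 1 : ℕ) + 1 : ℝ) + 1 + s = (x + 1 + s) + 1 := by push_cast; ring
    have hc : ((n + 1 : ℕ) + 1 : ℝ) = x + 1 := by push_cast; ring
    rw [e1, e2, hc, Real.Gamma_add_one (ne_of_gt hxs), Real.Gamma_add_one (ne_of_gt hx1s)]
    have hbern : 1 + (1 + s) * (-(1 / (x + 1))) ≤ (1 + (-(1 / (x + 1)))) ^ (1 + s) :=
      one_add_mul_self_le_rpow_one_add (by
        rw [neg_le, neg_neg, div_le_one hx1pos]; linarith) (by linarith)
    have hxx1 : (1 : ℝ) + (-(1 / (x + 1))) = x / (x + 1) := by field_simp; ring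
    have hkey : (x - s) / (x + 1 + s) ≤ x ^ (1 + s) / (x + 1) ^ (1 + s) := by
      have h1 : (x - s) / (x + 1 + s) ≤ (x - s) / (x + 1) := by
        rw [div_le_div_iff₀ hx1s hx1pos]
        nlinarith [mul_nonneg hxs.le hs0.le]
      have h2 : (x - s) / (x + 1) = 1 + (1 + s) * (-(1 / (x + 1))) := by
        field_simp; ring
      calc (x - s) / (x + 1 + s) ≤ (x - s) / (x + 1) := h1
        _ = 1 + (1 + s) * (-(1 / (x + 1))) := h2
        _ ≤ (1 + (-(1 / (x + 1)))) ^ (1 + s) := hbern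
        _ = (x / (x + 1)) ^ (1 + s) := by rw [hxx1]
        _ = x ^ (1 + s) / (x + 1) ^ (1 + s) :=
            Real.div_rpow hxpos.le hx1pos.le (1 + s)
    have hxp : (0:ℝ) < x ^ (1 + s) := Real.rpow_pos_of_pos hxpos _
    have hx1p : (0:ℝ) < (x + 1) ^ (1 + s) := Real.rpow_pos_of_pos hx1pos _
    have main : ((x - s) / (x + 1 + s)) * (x ^ (1 + s))⁻¹ ≤ ((x + 1) ^ (1 + s))⁻¹ := by
      calc ((x - s) / (x + 1 + s)) * (x ^ (1 + s))⁻¹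
          ≤ (x ^ (1 + s) / (x + 1) ^ (1 + s)) * (x ^ (1 + s))⁻¹ := by
            exact mul_le_mul_of_nonneg_right hkey (by positivity)
        _ = ((x + 1) ^ (1 + s))⁻¹ := by field_simp
    calc (x - s) * Real.Gamma (x - s) / ((x + 1 + s) * Real.Gamma (x + 1 + s))
        = ((x - s) / (x + 1 + s)) * (Real.Gamma (x - s) / Real.Gamma (x + 1 + s)) := by
          rw [div_mul_div_comm]
      _ ≤ ((x - s) / (x + 1 + s)) * ((Real.Gamma (1 - s) / Real.Gamma (2 + s)) * x ^ (-(1 + s))) :=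
          mul_le_mul_of_nonneg_left ih (by positivity)
      _ ≤ (Real.Gamma (1 - s) / Real.Gamma (2 + s)) * (x + 1) ^ (-(1 + s)) := by
          rw [Real.rpow_neg hxpos.le, Real.rpow_neg hx1pos.le]
          calc ((x - s) / (x + 1 + s)) * ((Real.Gamma (1 - s) / Real.Gamma (2 + s)) * (x ^ (1 + s))⁻¹)
              = (Real.Gamma (1 - s) / Real.Gamma (2 + s)) * (((x - s) / (x + 1 + s)) * (x ^ (1 + s))⁻¹) := by
                ring
            _ ≤ (Real.Gamma (1 - s) / Real.Gamma (2 + s)) * ((x + 1) ^ (1 + s))⁻¹ :=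
                mul_le_mul_of_nonneg_left main hR.le

noncomputable def KerC (s : ℝ) : ℝ :=
  (4 : ℝ) ^ s * Real.Gamma (1 / 2 + s) / (Real.sqrt Real.pi * |Real.Gamma (-s)|)

noncomputable def KerBnd (s : ℝ) : ℝ :=
  KerC s * (Real.Gamma (1 - s) / Real.Gamma (2 + s))

lemma KerC_pos {s : ℝ} (hs0 : 0 < s) (hs1 : s < 1) : 0 < KerC s := by
  have hG : Real.Gamma (-s) ≠ 0 := by
    apply Real.Gamma_ne_zero
    intro m
    cases m with
    | zero => simp; linarith
    | succ k =>
      have : (0:ℝ) ≤ k := Nat.cast_nonneg k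
      intro h
      rw [show ((-(k+1:ℕ) : ℝ)) = -((k:ℝ)+1) by push_cast; ring] at h
      linarith
  have h4 : (0:ℝ) < (4:ℝ) ^ s := Real.rpow_pos_of_pos (by norm_num) s
  have hGam : 0 < Real.Gamma (1/2 + s) := Real.Gamma_pos_of_pos (by linarith)
  have hpi : 0 < Real.sqrt Real.pi := Real.sqrt_pos.mpr Real.pi_pos
  exact div_pos (mul_pos h4 hGam) (mul_pos hpi (abs_pos.mpr hG))

lemma KerBnd_pos {s : ℝ} (hs0 : 0 < s) (hs1 : s < 1) : 0 < KerBnd s :=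
  mul_pos (KerC_pos hs0 hs1)
    (div_pos (Real.Gamma_pos_of_pos (by linarith)) (Real.Gamma_pos_of_pos (by linarith)))

lemma Ker_nonneg_s9 {s : ℝ} (hs0 : 0 < s) (hs1 : s < 1) (m : ℤ) : 0 ≤ Ker s m := by
  unfold Ker
  split
  · exact le_refl 0
  · rename_i h
    have h1 : (1:ℝ) ≤ (m.natAbs : ℝ) := by
      exact_mod_cast Nat.one_le_iff_ne_zero.mpr (Int.natAbs_ne_zero.mpr h)
    have : (0:ℝ) < KerC s * (Real.Gamma ((m.natAbs : ℝ) - s) / Real.Gamma ((m.natAbs : ℝ) + 1 + s)) :=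
      mul_pos (KerC_pos hs0 hs1)
        (div_pos (Real.Gamma_pos_of_pos (by linarith)) (Real.Gamma_pos_of_pos (by linarith)))
    exact this.le

lemma Ker_le {s : ℝ} (hs0 : 0 < s) (hs1 : s < 1) (m : ℤ) :
    Ker s m ≤ KerBnd s * |(m : ℝ)| ^ (-(1 + s)) := by
  unfold Ker
  split
  · rename_i h
    subst h
    rw [show |((0:ℤ) : ℝ)| = 0 by simp, Real.zero_rpow (by linarith), mul_zero]
  · rename_i h
    obtain ⟨k, hk⟩ : ∃ k : ℕ, m.natAbs = k + 1 :=
      ⟨m.natAbs - 1, by omega⟩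
    have habs : |(m : ℝ)| = ((k : ℝ) + 1) := by
      rw [← Int.cast_abs, Int.abs_eq_natAbs, hk]
      push_cast; ring
    rw [habs, hk]
    have := gamma_ratio_le hs0 hs1 k
    have hC : 0 ≤ KerC s := (KerC_pos hs0 hs1).le
    calc KerC s * (Real.Gamma (((k+1:ℕ) : ℝ) - s) / Real.Gamma (((k+1:ℕ) : ℝ) + 1 + s))
        ≤ KerC s * ((Real.Gamma (1 - s) / Real.Gamma (2 + s)) * ((k + 1 : ℝ)) ^ (-(1 + s))) := by
          apply mul_le_mul_of_nonneg_left _ hC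
          push_cast
          exact this
      _ = KerBnd s * ((k : ℝ) + 1) ^ (-(1 + s)) := by rw [KerBnd]; ring

lemma Ker_summable_s9 {s : ℝ} (hs0 : 0 < s) (hs1 : s < 1) : Summable (Ker s) := by
  have hsum : Summable (fun m : ℤ => KerBnd s * |(m : ℝ)| ^ (-(1 + s))) :=
    (Real.summable_abs_int_rpow (by linarith)).mul_left (KerBnd s)
  exact hsum.of_nonneg_of_le (Ker_nonneg_s9 hs0 hs1) (Ker_le hs0 hs1)

lemma Ker_le_const {s : ℝ} (hs0 : 0 < s) (hs1 : s < 1) (m : ℤ) : Ker s m ≤ KerBnd s := by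
  rcases eq_or_ne m 0 with rfl | h
  · simp [Ker]; exact (KerBnd_pos hs0 hs1).le
  · refine le_trans (Ker_le hs0 hs1 m) ?_
    have h1 : (1:ℝ) ≤ |(m : ℝ)| := by
      rw [← Int.cast_abs]
      exact_mod_cast Int.one_le_abs (by exact_mod_cast h)
    have := Real.rpow_le_one_of_one_le_of_nonpos h1 (by linarith : -(1+s) ≤ 0)
    calc KerBnd s * |(m : ℝ)| ^ (-(1 + s)) ≤ KerBnd s * 1 :=
          mul_le_mul_of_nonneg_left this (KerBnd_pos hs0 hs1).le
      _ = KerBnd s := mul_one _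


lemma pointwise_id {q : ℝ} (hq1 : 1 < q) (hq2 : q ≤ 2) {a b : ℝ} (ha : 0 ≤ a) (hb : 0 ≤ b) :
    q * a * (a - b) - a ^ (2 - q) * (a ^ q - b ^ q)
      = q * (q - 1) * ((a - b) ^ 2 *
          ∫ u in (0:ℝ)..1, (1 - u) * a ^ (2 - q) / ((1 - u) * a + u * b) ^ (2 - q)) := by
  have hq0 : q ≠ 0 := by linarith
  rcases eq_or_lt_of_le hq2 with hq2e | hq2'
  · -- q = 2
    subst hq2e
    have hint : (∫ u in (0:ℝ)..1, (1 - u) * a ^ (2 - (2:ℝ)) / ((1 - u) * a + u * b) ^ (2 - (2:ℝ)))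
        = ∫ u in (0:ℝ)..1, (1 - u) := by
      apply intervalIntegral.integral_congr
      intro u _
      simp [show (2:ℝ) - 2 = 0 by ring, Real.rpow_zero]
    rw [hint]
    have h12 : (∫ u in (0:ℝ)..1, (1 - u)) = 1/2 := by
      rw [intervalIntegral.integral_sub intervalIntegrable_const
        intervalIntegral.intervalIntegrable_id, intervalIntegral.integral_const, integral_id]
      norm_num
    rw [h12, show (2:ℝ) - 2 = 0 by ring, Real.rpow_zero,
      show (2:ℝ) = ((2:ℕ):ℝ) by norm_num, Real.rpow_natCast, Real.rpow_natCast]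
    ring
  · -- q < 2
    rcases eq_or_lt_of_le ha with ha0 | hapos
    · -- a = 0
      rw [← ha0]
      have h0 : (0:ℝ) ^ (2 - q) = 0 := Real.zero_rpow (by linarith)
      have hz : (∫ u in (0:ℝ)..1, (1 - u) * (0:ℝ) ^ (2 - q) / ((1 - u) * 0 + u * b) ^ (2 - q)) = 0 := by
        rw [h0]
        simp
      rw [hz, h0]
      ring
    · rcases eq_or_lt_of_le hb with hb0 | hbpos
      · -- b = 0
        rw [← hb0]
        have hq00 : (0:ℝ) ^ q = 0 := Real.zero_rpow hq0
        have hint : (∫ u in (0:ℝ)..1, (1 - u) * a ^ (2 - q) / ((1 - u) * a + u * 0) ^ (2 - q))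
            = ∫ u in (0:ℝ)..1, (1 - u) ^ (q - 1) := by
          apply intervalIntegral.integral_congr
          intro u hu
          rw [Set.uIcc_of_le (by norm_num : (0:ℝ) ≤ 1)] at hu
          show (1 - u) * a ^ (2 - q) / ((1 - u) * a + u * 0) ^ (2 - q) = (1 - u) ^ (q - 1)
          rcases eq_or_lt_of_le hu.2 with h1 | h1
          · subst h1
            simp [Real.zero_rpow (show q - 1 ≠ 0 by linarith)]
          · have h1u : 0 < 1 - u := by linarith
            have hA : (0:ℝ) < a ^ (2 - q) := Real.rpow_pos_of_pos hapos _
            have hB : (0:ℝ) < (1 - u) ^ (2 - q) := Real.rpow_pos_of_pos h1u _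
            have hcomb : (1 - u) ^ (q - 1) * (1 - u) ^ (2 - q) = 1 - u := by
              rw [← Real.rpow_add h1u]
              norm_num
            rw [mul_zero, add_zero, Real.mul_rpow h1u.le ha,
              mul_div_mul_right _ _ (ne_of_gt hA), div_eq_iff (ne_of_gt hB)]
            exact hcomb.symm
        rw [hint]
        have hval : (∫ u in (0:ℝ)..1, (1 - u) ^ (q - 1)) = 1 / q := by
          rw [intervalIntegral.integral_comp_sub_left (fun u => u ^ (q - 1)) 1]
          simp only [sub_self, sub_zero]
          rw [integral_rpow (Or.inl (by linarith : (-1:ℝ) < q - 1))]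
          rw [Real.one_rpow, Real.zero_rpow (by linarith : q - 1 + 1 ≠ 0)]
          rw [show q - 1 + 1 = q by ring]
          norm_num
        rw [hval, hq00]
        have e1 : a ^ (2 - q) * a ^ q = a ^ 2 := by
          rw [← Real.rpow_add hapos, show 2 - q + q = ((2:ℕ):ℝ) by norm_num, Real.rpow_natCast]
        have hq' : q * (1 / q) = 1 := by field_simp
        linear_combination -e1 - (q - 1) * a ^ 2 * hq'
      · -- a, b > 0
        set ℓ : ℝ → ℝ := fun u => (1 - u) * a + u * b with hℓ
        have hlpos : ∀ u ∈ Set.Icc (0:ℝ) 1, 0 < ℓ u := by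
          intro u hu
          obtain ⟨hu0, hu1⟩ := hu
          have h1 := mul_le_mul_of_nonneg_left (min_le_left a b) (by linarith : (0:ℝ) ≤ 1 - u)
          have h2 := mul_le_mul_of_nonneg_left (min_le_right a b) hu0
          have h3 : 0 < min a b := lt_min hapos hbpos
          simp only [hℓ]
          nlinarith
        have hla : ℓ 0 = a := by simp [hℓ]
        have hlb : ℓ 1 = b := by simp [hℓ]
        have hderivℓ : ∀ u : ℝ, HasDerivAt ℓ (b - a) u := by
          intro u
          have h1 : HasDerivAt (fun u : ℝ => (1 - u) * a) (-1 * a) u :=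
            ((hasDerivAt_id u).const_sub 1).mul_const a
          have h2 : HasDerivAt (fun u : ℝ => u * b) b u := by
            simpa using (hasDerivAt_id u).mul_const b
          have := h1.add h2
          simp only [hℓ]
          exact this.congr_deriv (by ring)
        set H : ℝ → ℝ := fun u => (1 - u) * (q * (b - a)) * (ℓ u) ^ (q - 1) + (ℓ u) ^ q with hH
        have hderivH : ∀ u ∈ Set.uIcc (0:ℝ) 1, HasDerivAt H
            (q * (q - 1) * (b - a) ^ 2 * ((1 - u) * (ℓ u) ^ (q - 2))) u := by
          intro u hu
          rw [Set.uIcc_of_le (by norm_num : (0:ℝ) ≤ 1)] at hu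
          have hne : ℓ u ≠ 0 := ne_of_gt (hlpos u hu)
          have d1 : HasDerivAt (fun u => (ℓ u) ^ (q - 1))
              ((b - a) * (q - 1) * (ℓ u) ^ (q - 1 - 1)) u :=
            (hderivℓ u).rpow_const (Or.inl hne)
          have d2 : HasDerivAt (fun u : ℝ => (1 - u) * (q * (b - a))) (-1 * (q * (b - a))) u :=
            ((hasDerivAt_id u).const_sub 1).mul_const (q * (b - a))
          have d3 : HasDerivAt (fun u => (ℓ u) ^ q) ((b - a) * q * (ℓ u) ^ (q - 1)) u :=
            (hderivℓ u).rpow_const (Or.inl hne)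
          have := (d2.mul d1).add d3
          exact this.congr_deriv (by rw [show q - 1 - 1 = q - 2 by ring]; ring)
        have hcontℓ : Continuous ℓ := by
          simp only [hℓ]
          fun_prop
        have hcont : ContinuousOn
            (fun u : ℝ => q * (q - 1) * (b - a) ^ 2 * ((1 - u) * (ℓ u) ^ (q - 2)))
            (Set.uIcc (0:ℝ) 1) := by
          rw [Set.uIcc_of_le (by norm_num : (0:ℝ) ≤ 1)]
          apply ContinuousOn.mul continuousOn_const
          apply ContinuousOn.mul (Continuous.continuousOn (by fun_prop))
          apply ContinuousOn.rpow_const hcontℓ.continuousOn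
          intro u hu
          exact Or.inl (ne_of_gt (hlpos u hu))
        have key : ∫ u in (0:ℝ)..1, q * (q - 1) * (b - a) ^ 2 * ((1 - u) * (ℓ u) ^ (q - 2))
            = H 1 - H 0 :=
          intervalIntegral.integral_eq_sub_of_hasDerivAt hderivH hcont.intervalIntegrable
        have hH1 : H 1 = b ^ q := by simp [hH, hlb]
        have hH0 : H 0 = q * (b - a) * a ^ (q - 1) + a ^ q := by
          simp [hH, hla]
        rw [intervalIntegral.integral_const_mul, hH1, hH0] at key
        have hint : (∫ u in (0:ℝ)..1, (1 - u) * a ^ (2 - q) / ((1 - u) * a + u * b) ^ (2 - q))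
            = a ^ (2 - q) * ∫ u in (0:ℝ)..1, (1 - u) * (ℓ u) ^ (q - 2) := by
          rw [← intervalIntegral.integral_const_mul]
          apply intervalIntegral.integral_congr
          intro u hu
          rw [Set.uIcc_of_le (by norm_num : (0:ℝ) ≤ 1)] at hu
          have hpos := hlpos u hu
          show (1 - u) * a ^ (2 - q) / (ℓ u) ^ (2 - q)
            = a ^ (2 - q) * ((1 - u) * (ℓ u) ^ (q - 2))
          rw [show q - 2 = -(2 - q) by ring, Real.rpow_neg hpos.le]
          have hne : (ℓ u) ^ (2 - q) ≠ 0 := ne_of_gt (Real.rpow_pos_of_pos hpos _)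
          field_simp
        rw [hint]
        have e2 : a ^ (2 - q) * a ^ (q - 1) = a := by
          rw [← Real.rpow_add hapos, show 2 - q + (q - 1) = 1 by ring, Real.rpow_one]
        linear_combination (-(a ^ (2 - q))) * key + (q * (b - a)) * e2

end Aux

/-- Integral representation of the pseudo-gradient `Γ_q`. -/
theorem gammaQ_eq_integral_sum (s : ℝ) (hs : s ∈ Set.Ioo (0 : ℝ) 1) (q : ℝ)
    (hq : q ∈ Set.Ioc (1 : ℝ) 2) (f : ℤ → ℝ) (hf : Summable f) (hf0 : ∀ x, 0 ≤ f x)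
    (x : ℤ) :
    GammaQ s q f x = q * (q - 1) * ∑' y : ℤ, Ker s (x - y) * (f x - f y) ^ 2 *
      ∫ u in (0 : ℝ)..1, (1 - u) * f x ^ (2 - q) / ((1 - u) * f x + u * f y) ^ (2 - q) := by
  obtain ⟨hs0, hs1⟩ := hs
  obtain ⟨hq1, hq2⟩ := hq
  have hq0 : q ≠ 0 := by linarith
  have hKsum : Summable (fun y : ℤ => Ker s (x - y)) :=
    (Ker_summable_s9 hs0 hs1).comp_injective sub_right_injective
  have hKnn : ∀ y : ℤ, 0 ≤ Ker s (x - y) := fun y => Ker_nonneg_s9 hs0 hs1 _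
  have hKle : ∀ y : ℤ, Ker s (x - y) ≤ KerBnd s := fun y => Ker_le_const hs0 hs1 _
  have hfq : Summable (fun y => f y ^ q) := by
    have h1 : ∀ᶠ y in Filter.cofinite, f y ≤ 1 :=
      hf.tendsto_cofinite_zero.eventually (eventually_le_nhds one_pos)
    apply Summable.of_norm_bounded_eventually hf
    filter_upwards [h1] with y hy
    rw [Real.norm_eq_abs, abs_of_nonneg (Real.rpow_nonneg (hf0 y) q)]
    rcases eq_or_lt_of_le (hf0 y) with h0 | h0
    · rw [← h0, Real.zero_rpow hq0]
    · calc f y ^ q ≤ f y ^ (1:ℝ) :=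
            Real.rpow_le_rpow_of_exponent_ge h0 hy hq1.le
        _ = f y := Real.rpow_one _
  have hfK : Summable (fun y => f y * Ker s (x - y)) := by
    apply Summable.of_nonneg_of_le
      (fun y => mul_nonneg (hf0 y) (hKnn y))
      (fun y => mul_le_mul_of_nonneg_left (hKle y) (hf0 y))
      (hf.mul_right (KerBnd s))
  have hfqK : Summable (fun y => f y ^ q * Ker s (x - y)) := by
    apply Summable.of_nonneg_of_le
      (fun y => mul_nonneg (Real.rpow_nonneg (hf0 y) q) (hKnn y))
      (fun y => mul_le_mul_of_nonneg_left (hKle y) (Real.rpow_nonneg (hf0 y) q))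
      (hfq.mul_right (KerBnd s))
  have S1 : Summable (fun y => (f x - f y) * Ker s (x - y)) :=
    ((hKsum.mul_left (f x)).sub hfK).congr (fun y => by ring)
  have S2 : Summable (fun y => (f x ^ q - f y ^ q) * Ker s (x - y)) :=
    ((hKsum.mul_left (f x ^ q)).sub hfqK).congr (fun y => by ring)
  have expand : GammaQ s q f x
      = ∑' y : ℤ, (q * f x * ((f x - f y) * Ker s (x - y))
          - f x ^ (2 - q) * ((f x ^ q - f y ^ q) * Ker s (x - y))) := by
    simp only [GammaQ, Lop]
    rw [Summable.tsum_sub (S1.mul_left (q * f x)) (S2.mul_left (f x ^ (2 - q))),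
      tsum_mul_left, tsum_mul_left]
  rw [expand, ← tsum_mul_left]
  apply tsum_congr
  intro y
  have hy := pointwise_id hq1 hq2 (hf0 x) (hf0 y)
  linear_combination (Ker s (x - y)) * hy
end

section
/- Let q ∈ (1,2]. For all real numbers s, t ≥ 0, t^q − s^q = q·s^{q−1}·(t−s) + q(q−1)·(t−s)² · ∫₀¹ (1−u)/((1−u)s + ut)^{2−q} du, where powers are real powers (with the convention 0^{q−1} = 0). -/
open MeasureTheory Real

theorem aux_mulpow (q u : ℝ) (hq : (1:ℝ) < q) (hu : 0 ≤ u) :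
    u * u ^ (q - 2) = u ^ (q - 1) := by
  rcases eq_or_lt_of_le hu with h | h
  · rw [← h, zero_mul, Real.zero_rpow (by linarith : q - 1 ≠ 0)]
  · rw [show q - 1 = 1 + (q - 2) by ring, Real.rpow_add h, Real.rpow_one]

theorem aux_inv (q x : ℝ) (hx : 0 ≤ x) :
    (1:ℝ) / x ^ (2 - q) = x ^ (q - 2) := by
  rw [show q - 2 = -(2 - q) by ring, Real.rpow_neg hx, one_div]

theorem aux_int (q : ℝ) (hq : (1:ℝ) < q) :
    ∫ u in (0:ℝ)..1, (1 - u) * u ^ (q - 2) = 1 / (q * (q - 1)) := by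
  have h1 : (-1:ℝ) < q - 2 := by linarith
  have h2 : (-1:ℝ) < q - 1 := by linarith
  have e : ∀ u ∈ Set.uIcc (0:ℝ) 1,
      (1 - u) * u ^ (q - 2) = u ^ (q - 2) - u ^ (q - 1) := by
    intro u hu
    rw [Set.uIcc_of_le (by norm_num : (0:ℝ) ≤ 1)] at hu
    rw [← aux_mulpow q u hq hu.1]; ring
  rw [intervalIntegral.integral_congr e,
    intervalIntegral.integral_sub (intervalIntegral.intervalIntegrable_rpow' h1)
      (intervalIntegral.intervalIntegrable_rpow' h2),
    integral_rpow (Or.inl h1), integral_rpow (Or.inl h2)]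
  rw [Real.one_rpow, Real.one_rpow, Real.zero_rpow (by linarith : q - 2 + 1 ≠ 0),
    Real.zero_rpow (by linarith : q - 1 + 1 ≠ 0)]
  have hq0 : q ≠ 0 := by linarith
  have hq1 : q - 1 ≠ 0 := by linarith
  rw [show q - 2 + 1 = q - 1 by ring, show q - 1 + 1 = q by ring,
    div_sub_div _ _ hq1 hq0, div_eq_div_iff (mul_ne_zero hq1 hq0) (mul_ne_zero hq0 hq1)]
  ring

theorem aux_ftc (q s c : ℝ)
    (h : ∀ u ∈ Set.Icc (0:ℝ) 1, 0 < s + u * c) :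
    ∫ u in (0:ℝ)..1, (1 - u) * (q * (q-1) * c^2 * (s + u*c) ^ (q-2)) =
      (s + c) ^ q - s ^ q - q * s ^ (q-1) * c := by
  have key : ∀ u ∈ Set.uIcc (0:ℝ) 1, HasDerivAt
      (fun u : ℝ => (1 - u) * (q * c * (s + u*c) ^ (q-1)) + (s + u*c) ^ q)
      ((1 - u) * (q * (q-1) * c^2 * (s + u*c) ^ (q-2))) u := by
    intro u hu
    rw [Set.uIcc_of_le (by norm_num : (0:ℝ) ≤ 1)] at hu
    have hpos := h u hu
    have hlin : HasDerivAt (fun u : ℝ => s + u * c) c u := by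
      simpa using ((hasDerivAt_id u).mul_const c).const_add s
    have h1 : HasDerivAt (fun u : ℝ => (s + u*c) ^ q)
        (q * (s + u*c) ^ (q-1) * c) u := by
      have := (Real.hasDerivAt_rpow_const (p := q) (Or.inl hpos.ne')).comp u hlin; exact this
    have h2 : HasDerivAt (fun u : ℝ => (s + u*c) ^ (q-1))
        ((q-1) * (s + u*c) ^ (q-1-1) * c) u := by
      have := (Real.hasDerivAt_rpow_const (p := q-1) (Or.inl hpos.ne')).comp u hlin; exact this
    have h3 : HasDerivAt (fun u : ℝ => (1 - u)) (-1 : ℝ) u := by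
      simpa using ((hasDerivAt_id u).const_sub 1)
    have h4 : HasDerivAt (fun u : ℝ => (1 - u) * (q * c * (s + u*c) ^ (q-1)) + (s + u*c) ^ q) _ u :=
      (h3.mul ((h2.const_mul (q * c)))).add h1
    convert h4 using 1
    ring_nf
  have hcont : ContinuousOn
      (fun u : ℝ => (1 - u) * (q * (q-1) * c^2 * (s + u*c) ^ (q-2)))
      (Set.uIcc 0 1) := by
    rw [Set.uIcc_of_le (by norm_num : (0:ℝ) ≤ 1)]
    apply ContinuousOn.mul (by fun_prop)
    apply ContinuousOn.mul continuousOn_const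
    exact ContinuousOn.rpow_const (by fun_prop) (fun u hu => Or.inl (h u hu).ne')
  have := intervalIntegral.integral_eq_sub_of_hasDerivAt key hcont.intervalIntegrable
  rw [this]
  norm_num
  ring


/-- Taylor-type identity with integral remainder: for `q ∈ (1,2]` and `s, t ≥ 0`,
`t^q - s^q = q s^{q-1} (t-s) + q(q-1)(t-s)² ∫₀¹ (1-u)/((1-u)s + ut)^{2-q} du`
(real powers, with the rpow convention `0^{q-1} = 0`). -/
theorem rpow_taylor_identity (q : ℝ) (hq : q ∈ Set.Ioc (1 : ℝ) 2) (s t : ℝ)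
    (hs : 0 ≤ s) (ht : 0 ≤ t) :
    t ^ q - s ^ q = q * s ^ (q - 1) * (t - s) +
      q * (q - 1) * (t - s) ^ 2 *
        ∫ u in (0 : ℝ)..1, (1 - u) / ((1 - u) * s + u * t) ^ (2 - q) := by
  obtain ⟨hq1, hq2⟩ := hq
  have hq0 : q ≠ 0 := by linarith
  have hqm1 : q - 1 ≠ 0 := by linarith
  rcases eq_or_ne t s with rfl | hst
  · simp
  rcases eq_or_lt_of_le hs with hs0 | hs'
  · -- s = 0, t > 0
    subst hs0
    have ht' : 0 < t := lt_of_le_of_ne ht (by simpa [eq_comm] using hst)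
    have hint : ∫ u in (0:ℝ)..1, (1 - u) / ((1 - u) * 0 + u * t) ^ (2 - q)
        = t ^ (q - 2) * (1 / (q * (q - 1))) := by
      rw [← aux_int q hq1, ← intervalIntegral.integral_const_mul]
      apply intervalIntegral.integral_congr
      intro u hu
      rw [Set.uIcc_of_le (by norm_num : (0:ℝ) ≤ 1)] at hu
      simp only
      rw [show (1 - u) * 0 + u * t = u * t by ring, div_eq_mul_one_div,
        aux_inv q _ (mul_nonneg hu.1 ht'.le), Real.mul_rpow hu.1 ht'.le]
      ring
    rw [hint, Real.zero_rpow hq0, Real.zero_rpow hqm1]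
    have e2 : t ^ (2:ℕ) * t ^ (q - 2) = t ^ q := by
      rw [← Real.rpow_natCast t 2, ← Real.rpow_add ht']; norm_num
    push_cast at e2
    rw [← e2]
    field_simp
    ring
  rcases eq_or_lt_of_le ht with ht0 | ht'
  · -- t = 0, s > 0
    subst ht0
    have hint : ∫ u in (0:ℝ)..1, (1 - u) / ((1 - u) * s + u * 0) ^ (2 - q)
        = s ^ (q - 2) * (1 / q) := by
      have e : Set.EqOn (fun u : ℝ => (1 - u) / ((1 - u) * s + u * 0) ^ (2 - q))
          (fun u : ℝ => s ^ (q - 2) * (1 - u) ^ (q - 1)) (Set.uIcc 0 1) := by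
        intro u hu
        rw [Set.uIcc_of_le (by norm_num : (0:ℝ) ≤ 1)] at hu
        have h1u : (0:ℝ) ≤ 1 - u := by linarith [hu.2]
        simp only
        rw [show (1 - u) * s + u * 0 = (1 - u) * s by ring, div_eq_mul_one_div,
          aux_inv q _ (mul_nonneg h1u hs'.le), Real.mul_rpow h1u hs'.le,
          show (1 - u) * ((1 - u) ^ (q - 2) * s ^ (q - 2))
            = ((1 - u) * (1 - u) ^ (q - 2)) * s ^ (q - 2) by ring,
          aux_mulpow q _ hq1 h1u]
        ring
      rw [intervalIntegral.integral_congr e, intervalIntegral.integral_const_mul]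
      congr 1
      have := intervalIntegral.integral_comp_sub_left (a := (0:ℝ)) (b := 1)
        (fun x => x ^ (q - 1)) 1
      norm_num at this
      rw [this, integral_rpow (Or.inl (by linarith : (-1:ℝ) < q - 1))]
      rw [Real.one_rpow, Real.zero_rpow (by linarith : q - 1 + 1 ≠ 0),
        show q - 1 + 1 = q by ring]
      norm_num
    rw [hint, Real.zero_rpow hq0]
    have e2 : s ^ (2:ℕ) * s ^ (q - 2) = s ^ q := by
      rw [← Real.rpow_natCast s 2, ← Real.rpow_add hs']; norm_num
    have e3 : s ^ (q - 1) * s = s ^ q := by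
      rw [← Real.rpow_add_one hs'.ne', show q - 1 + 1 = q by ring]
    push_cast at e2
    field_simp
    linear_combination (1 - q) * e2 + q * e3
  · -- s > 0, t > 0
    have hpos : ∀ u ∈ Set.Icc (0:ℝ) 1, 0 < s + u * (t - s) := by
      intro u hu
      rcases eq_or_lt_of_le hu.1 with h | h
      · simpa [← h] using hs'
      · have : 0 < u * t := mul_pos h ht'
        nlinarith [mul_nonneg (sub_nonneg.2 hu.2) hs, hu.2]
    have hcongr : Set.EqOn (fun u : ℝ => (1 - u) / ((1 - u) * s + u * t) ^ (2 - q))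
        (fun u : ℝ => (1 - u) * (s + u * (t - s)) ^ (q - 2)) (Set.uIcc 0 1) := by
      intro u hu
      rw [Set.uIcc_of_le (by norm_num : (0:ℝ) ≤ 1)] at hu
      have h := hpos u hu
      simp only
      rw [show (1 - u) * s + u * t = s + u * (t - s) by ring, div_eq_mul_one_div,
        aux_inv q _ h.le]
    rw [intervalIntegral.integral_congr hcongr]
    have key := aux_ftc q s (t - s) hpos
    rw [show s + (t - s) = t by ring] at key
    have key2 : q * (q - 1) * (t - s) ^ 2 *
        ∫ u in (0:ℝ)..1, (1 - u) * (s + u * (t - s)) ^ (q - 2) =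
        t ^ q - s ^ q - q * s ^ (q - 1) * (t - s) := by
      rw [← intervalIntegral.integral_const_mul, ← key]
      apply intervalIntegral.integral_congr
      intro u _
      simp only; ring
    linarith
end

section
/- For every summable f : ℤ → ℝ, every T > 0 and every x ∈ ℤ, P_T(f²)(x) − (P_T f(x))² = ∫₀^T P_u( |∇(P_{T−u} f)|² )(x) du. -/
open MeasureTheory Real NormedSpace
open scoped ENNReal NNReal

set_option linter.unusedSectionVars false
set_option maxHeartbeats 1000000
set_option synthInstance.maxHeartbeats 200000

namespace HeatAux

lemma ker_nonneg {s : ℝ} (hs : s ∈ Set.Ioo (0:ℝ) 1) (m : ℤ) : 0 ≤ Ker s m := by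
  obtain ⟨hs0, hs1⟩ := hs
  unfold Ker
  split
  · exact le_rfl
  · rename_i hm
    have h1 : (0:ℝ) < (4 : ℝ) ^ s := Real.rpow_pos_of_pos (by norm_num) s
    have h2 : (0:ℝ) < Real.Gamma (1/2 + s) := Real.Gamma_pos_of_pos (by linarith)
    have h3 : (0:ℝ) < Real.sqrt Real.pi := Real.sqrt_pos.mpr Real.pi_pos
    have h4 : Real.Gamma (-s) ≠ 0 := by
      apply Real.Gamma_ne_zero
      intro n
      cases n with
      | zero => simp; linarith
      | succ k => intro h; push_cast at h; linarith [Nat.cast_nonneg (α := ℝ) k]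
    have h5 : (1:ℝ) ≤ (m.natAbs : ℝ) := by
      have : 1 ≤ m.natAbs := by omega
      exact_mod_cast this
    have h6 : (0:ℝ) < Real.Gamma ((m.natAbs : ℝ) - s) := Real.Gamma_pos_of_pos (by linarith)
    have h7 : (0:ℝ) < Real.Gamma ((m.natAbs : ℝ) + 1 + s) := Real.Gamma_pos_of_pos (by linarith)
    positivity

lemma ker_neg (s : ℝ) (m : ℤ) : Ker s (-m) = Ker s m := by
  unfold Ker; simp [Int.natAbs_neg, neg_eq_zero]

lemma ker_sub_symm (s : ℝ) (x y : ℤ) : Ker s (y - x) = Ker s (x - y) := by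
  rw [← ker_neg s (x - y)]; ring_nf

/-- telescoping summand -/
lemma tele {s : ℝ} (hs : s ∈ Set.Ioo (0:ℝ) 1) (n : ℕ) :
    Real.Gamma ((n:ℝ) + 1 - s) / Real.Gamma ((n:ℝ) + 2 + s)
      = (Real.Gamma ((n:ℝ) + 1 - s) / Real.Gamma ((n:ℝ) + 1 + s)
        - Real.Gamma (((n:ℝ) + 1) + 1 - s) / Real.Gamma (((n:ℝ) + 1) + 1 + s)) / (2 * s) := by
  obtain ⟨hs0, hs1⟩ := hs
  have hn : (0:ℝ) ≤ n := Nat.cast_nonneg n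
  have e1 : Real.Gamma ((n:ℝ) + 1 + 1 - s) = ((n:ℝ) + 1 - s) * Real.Gamma ((n:ℝ) + 1 - s) := by
    rw [show (n:ℝ) + 1 + 1 - s = ((n:ℝ) + 1 - s) + 1 by ring, Real.Gamma_add_one (by linarith)]
  have e2 : Real.Gamma ((n:ℝ) + 1 + 1 + s) = ((n:ℝ) + 1 + s) * Real.Gamma ((n:ℝ) + 1 + s) := by
    rw [show (n:ℝ) + 1 + 1 + s = ((n:ℝ) + 1 + s) + 1 by ring, Real.Gamma_add_one (by positivity)]
  have e3 : Real.Gamma ((n:ℝ) + 2 + s) = ((n:ℝ) + 1 + s) * Real.Gamma ((n:ℝ) + 1 + s) := by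
    rw [show (n:ℝ) + 2 + s = ((n:ℝ) + 1 + s) + 1 by ring, Real.Gamma_add_one (by positivity)]
  have g1 : Real.Gamma ((n:ℝ) + 1 + s) ≠ 0 := ne_of_gt (Real.Gamma_pos_of_pos (by positivity))
  have g2 : ((n:ℝ) + 1 + s) ≠ 0 := by positivity
  rw [show ((n:ℝ) + 1) + 1 - s = (n:ℝ) + 1 + 1 - s by ring,
    show ((n:ℝ) + 1) + 1 + s = (n:ℝ) + 1 + 1 + s by ring, e1, e2, e3]
  field_simp
  ring

lemma ker_summable_nat {s : ℝ} (hs : s ∈ Set.Ioo (0:ℝ) 1) :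
    Summable (fun n : ℕ => Ker s (n : ℤ)) := by
  obtain ⟨hs0, hs1⟩ := hs
  set c : ℝ := (4 : ℝ) ^ s * Real.Gamma (1 / 2 + s) / (Real.sqrt Real.pi * |Real.Gamma (-s)|) with hc
  set d : ℕ → ℝ := fun n => Real.Gamma ((n:ℝ) + 1 - s) / Real.Gamma ((n:ℝ) + 1 + s) with hd
  have hker : ∀ n : ℕ, Ker s ((n:ℤ) + 1) = c * (Real.Gamma ((n:ℝ) + 1 - s) / Real.Gamma ((n:ℝ) + 2 + s)) := by
    intro n
    unfold Ker
    rw [if_neg (by omega)]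
    have : (((n:ℤ) + 1).natAbs : ℝ) = (n:ℝ) + 1 := by
      have : ((n:ℤ) + 1).natAbs = n + 1 := by omega
      rw [this]; push_cast; ring
    rw [this]
    rw [hc]; ring
  have hd_nonneg : ∀ n, 0 ≤ d n := by
    intro n
    have hn : (0:ℝ) ≤ n := Nat.cast_nonneg n
    exact div_nonneg (Real.Gamma_pos_of_pos (by linarith)).le (Real.Gamma_pos_of_pos (by positivity)).le
  have hterm_nonneg : ∀ n : ℕ, 0 ≤ Ker s ((n:ℤ) + 1) := by
    intro n
    rw [hker n]
    have hn : (0:ℝ) ≤ n := Nat.cast_nonneg n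
    have hc0 : 0 ≤ c := by
      have h3 : (0:ℝ) < Real.sqrt Real.pi := Real.sqrt_pos.mpr Real.pi_pos
      have h4 : Real.Gamma (-s) ≠ 0 := by
        apply Real.Gamma_ne_zero
        intro k
        cases k with
        | zero => simp; linarith
        | succ j => intro h; push_cast at h; linarith [Nat.cast_nonneg (α := ℝ) j]
      have h1 : (0:ℝ) < (4 : ℝ) ^ s := Real.rpow_pos_of_pos (by norm_num) s
      have h2 : (0:ℝ) < Real.Gamma (1/2 + s) := Real.Gamma_pos_of_pos (by linarith)
      positivity
    exact mul_nonneg hc0 (div_nonneg (Real.Gamma_pos_of_pos (by linarith)).le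
      (Real.Gamma_pos_of_pos (by positivity)).le)
  have hsum : Summable (fun n : ℕ => Ker s ((n:ℤ) + 1)) := by
    apply summable_of_sum_range_le (c := c * (d 0 / (2*s))) hterm_nonneg
    intro N
    have : ∀ n : ℕ, Ker s ((n:ℤ) + 1) = c * ((d n - d (n+1)) / (2*s)) := by
      intro n
      rw [hker n, tele ⟨hs0, hs1⟩ n]
      simp only [hd]
      push_cast
      ring_nf
    calc ∑ n ∈ Finset.range N, Ker s ((n:ℤ) + 1)
        = ∑ n ∈ Finset.range N, c * ((d n - d (n+1)) / (2*s)) := Finset.sum_congr rfl (fun n _ => this n)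
      _ = (c / (2*s)) * ∑ n ∈ Finset.range N, (d n - d (n+1)) := by rw [Finset.mul_sum]; congr 1; ext n; ring
      _ = (c / (2*s)) * (d 0 - d N) := by rw [Finset.sum_range_sub' d N]
      _ ≤ (c / (2*s)) * d 0 := by
          apply mul_le_mul_of_nonneg_left _ (by positivity)
          linarith [hd_nonneg N]
      _ = c * (d 0 / (2*s)) := by ring
  have heq : (fun n : ℕ => Ker s (((n + 1 : ℕ)):ℤ)) = fun n : ℕ => Ker s ((n:ℤ) + 1) := by
    funext n; norm_num
  exact (summable_nat_add_iff (f := fun n : ℕ => Ker s (n:ℤ)) 1).mp (heq ▸ hsum)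

lemma ker_summable {s : ℝ} (hs : s ∈ Set.Ioo (0:ℝ) 1) : Summable (Ker s) := by
  apply Summable.of_nat_of_neg (ker_summable_nat hs)
  simpa only [ker_neg] using ker_summable_nat hs

noncomputable abbrev E := lp (fun _ : ℤ => ℝ) 1

instance : Fact ((1:ℝ≥0∞) ≤ 1) := ⟨le_rfl⟩

lemma mem1_iff {f : ℤ → ℝ} : Memℓp f 1 ↔ Summable (fun x => |f x|) := by
  rw [memℓp_gen_iff (by norm_num)]
  simp [Real.norm_eq_abs, ENNReal.toReal_one]

lemma summ (f : E) : Summable (fun x => |f x|) := mem1_iff.mp (lp.memℓp f)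

lemma norm1 (f : E) : ‖f‖ = ∑' x, |f x| := by
  rw [lp.norm_eq_tsum_rpow (by norm_num) f]
  simp [Real.norm_eq_abs, ENNReal.toReal_one]

lemma abs_apply_le (f : E) (x : ℤ) : |f x| ≤ ‖f‖ := by
  simpa [Real.norm_eq_abs] using lp.norm_apply_le_norm one_ne_zero f x

instance : Nontrivial E := by
  refine ⟨lp.single 1 (0:ℤ) (1:ℝ), 0, fun h => ?_⟩
  have := congrArg (fun g : E => g 0) h
  simp [lp.single_apply] at this

section Op

/-- total mass of the kernel -/
noncomputable def S (s : ℝ) : ℝ := ∑' m, Ker s m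

/-- convolution with the kernel -/
noncomputable def convFn (s : ℝ) (g : ℤ → ℝ) (x : ℤ) : ℝ := ∑' y, Ker s (x - y) * g y

variable {s : ℝ} (hs : s ∈ Set.Ioo (0:ℝ) 1)
include hs

lemma kr_le_S (m : ℤ) : Ker s m ≤ S s := Summable.le_tsum (ker_summable hs) m (fun n _ => ker_nonneg hs n)

lemma S_nonneg : 0 ≤ S s := tsum_nonneg (ker_nonneg hs)

lemma summable_shift (x : ℤ) : Summable (fun y : ℤ => Ker s (x - y)) :=
  (ker_summable hs).comp_injective (fun a b h => by omega)

lemma summable_shift' (y : ℤ) : Summable (fun x : ℤ => Ker s (x - y)) :=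
  (ker_summable hs).comp_injective (fun a b h => by omega)

lemma tsum_shift (x : ℤ) : ∑' y : ℤ, Ker s (x - y) = S s := by
  simpa [S] using (Equiv.subLeft x).tsum_eq (Ker s)

lemma tsum_shift' (y : ℤ) : ∑' x : ℤ, Ker s (x - y) = S s := by
  simpa [S] using (Equiv.subRight y).tsum_eq (Ker s)

lemma conv_term_summable {g : ℤ → ℝ} (hg : Summable fun y => |g y|) (x : ℤ) :
    Summable (fun y => Ker s (x - y) * g y) := by
  apply Summable.of_norm_bounded (hg.mul_left (S s))
  intro y
  rw [norm_mul, Real.norm_eq_abs, Real.norm_eq_abs, abs_of_nonneg (ker_nonneg hs _)]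
  exact mul_le_mul_of_nonneg_right (kr_le_S hs _) (abs_nonneg _)

lemma double_summable {g : ℤ → ℝ} (hg : Summable fun y => |g y|) :
    Summable (fun p : ℤ × ℤ => Ker s (p.2 - p.1) * |g p.1|) := by
  refine (summable_prod_of_nonneg (fun p => mul_nonneg (ker_nonneg hs _) (abs_nonneg _))).mpr ⟨?_, ?_⟩
  · intro y; exact (summable_shift' hs y).mul_right (|g y|)
  · apply Summable.congr (hg.mul_left (S s))
    intro y
    simp only
    rw [tsum_mul_right, tsum_shift' hs]

lemma conv_abs_summable {g : ℤ → ℝ} (hg : Summable fun y => |g y|) :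
    Summable (fun x => ∑' y, Ker s (x - y) * |g y|) := by
  have h := (double_summable hs hg).prod_symm
  exact ((summable_prod_of_nonneg (fun p => mul_nonneg (ker_nonneg hs _) (abs_nonneg _))).mp h).2

lemma conv_abs_term_summable {g : ℤ → ℝ} (hg : Summable fun y => |g y|) (x : ℤ) :
    Summable (fun y => Ker s (x - y) * |g y|) :=
  conv_term_summable hs (g := fun y => |g y|) (by simpa [abs_abs] using hg) x

lemma conv_tsum_tsum {g : ℤ → ℝ} (hg : Summable fun y => |g y|) :
    ∑' x : ℤ, ∑' y : ℤ, Ker s (x - y) * |g y| = S s * ∑' y, |g y| := by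
  have h := Summable.tsum_comm' (f := fun (y x : ℤ) => Ker s (x - y) * |g y|)
    (double_summable hs hg) (fun y => (summable_shift' hs y).mul_right (|g y|))
    (fun x => conv_abs_term_summable hs hg x)
  rw [h]
  rw [← tsum_mul_left]
  congr 1
  funext y
  rw [tsum_mul_right, tsum_shift' hs]

lemma conv_abs_le {g : ℤ → ℝ} (hg : Summable fun y => |g y|) (x : ℤ) :
    |convFn s g x| ≤ ∑' y, Ker s (x - y) * |g y| := by
  have h := norm_tsum_le_tsum_norm (f := fun y => Ker s (x - y) * g y) ?_
  · simpa [convFn, Real.norm_eq_abs, abs_mul, abs_of_nonneg (ker_nonneg hs _)] using h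
  · apply Summable.congr (conv_abs_term_summable hs hg x)
    intro y
    simp [Real.norm_eq_abs, abs_mul, abs_of_nonneg (ker_nonneg hs _)]

lemma conv_mem {g : ℤ → ℝ} (hg : Summable fun y => |g y|) : Memℓp (convFn s g) 1 := by
  apply mem1_iff.mpr
  apply Summable.of_nonneg_of_le (fun x => abs_nonneg _) (conv_abs_le hs hg)
  exact conv_abs_summable hs hg

lemma conv_abs_tsum_le {g : ℤ → ℝ} (hg : Summable fun y => |g y|) :
    ∑' x, |convFn s g x| ≤ S s * ∑' y, |g y| := by
  rw [← conv_tsum_tsum hs hg]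
  exact Summable.tsum_le_tsum (conv_abs_le hs hg) (mem1_iff.mp (conv_mem hs hg)) (conv_abs_summable hs hg)

noncomputable def convL : E →ₗ[ℝ] E where
  toFun g := ⟨convFn s ⇑g, conv_mem hs (summ g)⟩
  map_add' g h := by
    apply lp.ext
    funext x
    have h1 := conv_term_summable hs (summ g) x
    have h2 := conv_term_summable hs (summ h) x
    simp only [lp.coeFn_add, Pi.add_apply]
    show convFn s (⇑g + ⇑h) x = convFn s ⇑g x + convFn s ⇑h x
    unfold convFn
    rw [← Summable.tsum_add h1 h2]
    congr 1; funext y; simp [Pi.add_apply]; ring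
  map_smul' c g := by
    apply lp.ext
    funext x
    simp only [lp.coeFn_smul, Pi.smul_apply, RingHom.id_apply, smul_eq_mul]
    show convFn s (c • ⇑g) x = c * convFn s ⇑g x
    unfold convFn
    rw [← tsum_mul_left]
    congr 1; funext y; simp [Pi.smul_apply, smul_eq_mul]; ring

noncomputable def convCLM : E →L[ℝ] E :=
  LinearMap.mkContinuous (convL hs) (S s) (by
    intro g
    have h0 : ‖(convL hs g : E)‖ = ∑' x, |convFn s ⇑g x| := norm1 _
    rw [h0, norm1 g]
    exact conv_abs_tsum_le hs (summ g))

lemma convCLM_apply (g : E) (x : ℤ) : (convCLM hs g) x = convFn s ⇑g x := rfl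

lemma lop_eq {g : ℤ → ℝ} (hg : Summable fun y => |g y|) (x : ℤ) :
    Lop s g x = S s * g x - convFn s g x := by
  unfold Lop convFn
  have h1 : Summable (fun y : ℤ => g x * Ker s (x - y)) := (summable_shift hs x).mul_left (g x)
  have h2 := conv_term_summable hs hg x
  rw [show (fun y : ℤ => (g x - g y) * Ker s (x - y))
      = fun y => g x * Ker s (x - y) - Ker s (x - y) * g y from funext fun y => by ring]
  rw [Summable.tsum_sub h1 h2, tsum_mul_left, tsum_shift hs]
  ring

/-- the Laplacian as a bounded operator on `ℓ¹` -/
noncomputable def Aop : E →L[ℝ] E := S s • ContinuousLinearMap.id ℝ E - convCLM hs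

lemma Aop_apply (g : E) (x : ℤ) : (Aop hs g) x = Lop s (⇑g) x := by
  have : (Aop hs g) = S s • g - convCLM hs g := rfl
  rw [this, lop_eq hs (summ g) x]
  simp [lp.coeFn_sub, lp.coeFn_smul, Pi.sub_apply, Pi.smul_apply, smul_eq_mul, convCLM_apply]
  rfl

lemma Aop_coe (g : E) : ⇑(Aop hs g) = Lop s ⇑g := funext (Aop_apply hs g)

lemma Aop_pow_coe (n : ℕ) (g : E) : ⇑((Aop hs ^ n) g) = (Lop s)^[n] ⇑g := by
  induction n generalizing g with
  | zero => simp
  | succ k ih =>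
      rw [pow_succ, ContinuousLinearMap.mul_apply, Function.iterate_succ, Function.comp_apply,
        ih (Aop hs g), Aop_coe hs g]

/-- evaluation at a point as a continuous linear functional -/
noncomputable def evCLM (x : ℤ) : E →L[ℝ] ℝ :=
  LinearMap.mkContinuous
    { toFun := fun g : E => g x
      map_add' := fun g h => by simp [lp.coeFn_add]
      map_smul' := fun c g => by simp [lp.coeFn_smul] }
    1 (fun g => by rw [one_mul]; exact abs_apply_le g x)

lemma evCLM_apply (x : ℤ) (g : E) : evCLM x g = g x := rfl

omit hs

lemma mul_mem (g h : E) : Memℓp (fun x => g x * h x) 1 := by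
  apply mem1_iff.mpr
  refine Summable.of_nonneg_of_le (fun x => abs_nonneg _) (fun x => ?_) ((summ g).mul_right ‖h‖)
  rw [abs_mul]
  exact mul_le_mul_of_nonneg_left (abs_apply_le h x) (abs_nonneg _)

/-- pointwise multiplication as a continuous bilinear map on `ℓ¹` -/
noncomputable def mulCLM : E →L[ℝ] E →L[ℝ] E :=
  LinearMap.mkContinuous₂
    (LinearMap.mk₂ ℝ (fun g h : E => (⟨fun x => g x * h x, mul_mem g h⟩ : E))
      (fun g₁ g₂ h => by apply lp.ext; funext x; simp [lp.coeFn_add]; exact add_mul _ _ _)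
      (fun c g h => by apply lp.ext; funext x; simp [lp.coeFn_smul]; ring)
      (fun g h₁ h₂ => by apply lp.ext; funext x; simp [lp.coeFn_add]; exact mul_add _ _ _)
      (fun c g h => by apply lp.ext; funext x; simp [lp.coeFn_smul]; ring))
    1 (by
      intro g h
      have h0 : ‖(LinearMap.mk₂ ℝ (fun g h : E => (⟨fun x => g x * h x, mul_mem g h⟩ : E))
          (fun g₁ g₂ h => by apply lp.ext; funext x; simp [lp.coeFn_add]; exact add_mul _ _ _)
          (fun c g h => by apply lp.ext; funext x; simp [lp.coeFn_smul]; ring)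
          (fun g h₁ h₂ => by apply lp.ext; funext x; simp [lp.coeFn_add]; exact mul_add _ _ _)
          (fun c g h => by apply lp.ext; funext x; simp [lp.coeFn_smul]; ring) g h : E)‖
          = ∑' x, |g x * h x| := norm1 _
      rw [h0, one_mul, norm1 g]
      calc ∑' x, |g x * h x| ≤ ∑' x, |g x| * ‖h‖ := by
            apply Summable.tsum_le_tsum _ _ ((summ g).mul_right _)
            · intro x
              rw [abs_mul]
              exact mul_le_mul_of_nonneg_left (abs_apply_le h x) (abs_nonneg _)
            · exact mem1_iff.mp (mul_mem g h)
        _ = (∑' x, |g x|) * ‖h‖ := tsum_mul_right)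

lemma mulCLM_apply (g h : E) (x : ℤ) : (mulCLM g h) x = g x * h x := rfl

lemma mulCLM_comm (g h : E) : mulCLM g h = mulCLM h g := by
  apply lp.ext; funext x; simp [mulCLM_apply]; ring

include hs

/-- minus the Laplacian, generator of the heat semigroup -/
noncomputable def Bop : E →L[ℝ] E := -(Aop hs)

lemma heat_eq (t : ℝ) (h : E) (x : ℤ) :
    heat s t ⇑h x = (NormedSpace.exp (t • Bop hs)) h x := by
  have hsum := NormedSpace.expSeries_summable' (𝕂 := ℝ) (t • Bop hs)
  set Ψ : (E →L[ℝ] E) →L[ℝ] ℝ := (evCLM x).comp (ContinuousLinearMap.apply ℝ E h) with hΨ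
  have h1 : (NormedSpace.exp (t • Bop hs)) h x = Ψ (NormedSpace.exp (t • Bop hs)) := rfl
  rw [h1, NormedSpace.exp_eq_tsum ℝ]
  simp only
  rw [ContinuousLinearMap.map_tsum Ψ hsum]
  unfold heat
  congr 1
  funext n
  have hpow : (t • Bop hs)^n = ((-t)^n) • ((Aop hs)^n) := by
    rw [show t • Bop hs = (-t) • (Aop hs) from by simp [Bop, smul_neg, neg_smul], smul_pow]
  have h2 : Ψ ((((n.factorial : ℝ))⁻¹ : ℝ) • (t • Bop hs)^n)
      = ((n.factorial : ℝ))⁻¹ * ((((t • Bop hs)^n) h) x) := by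
    rw [_root_.map_smul, smul_eq_mul]
    rfl
  rw [h2, hpow]
  rw [ContinuousLinearMap.smul_apply, lp.coeFn_smul, Pi.smul_apply, smul_eq_mul,
    Aop_pow_coe hs n h]
  rw [div_eq_mul_inv]
  ring

/-- the carré du champ `Γ(g) = 2 g L g − L(g²)` as an `ℓ¹` element -/
noncomputable def gammaE (g : E) : E := (2:ℝ) • mulCLM g (Aop hs g) - Aop hs (mulCLM g g)

lemma gradSq_eq (g : E) (x : ℤ) : gradSq s ⇑g x = (gammaE hs g) x := by
  have hg := summ g
  have hg2 : Summable fun y => |g y * g y| := mem1_iff.mp (mul_mem g g)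
  have h1 : Summable fun y : ℤ => g x * Ker s (x - y) := (summable_shift hs x).mul_left _
  have h2 := conv_term_summable hs hg x
  have h1' : Summable fun y : ℤ => (g x * g x) * Ker s (x - y) := (summable_shift hs x).mul_left _
  have h2' := conv_term_summable hs (g := fun y => g y * g y) hg2 x
  have S1 : Summable fun y : ℤ => (g x - g y) * Ker s (x - y) :=
    ((h1.sub h2).congr (fun y => by ring))
  have S2 : Summable fun y : ℤ => (g x * g x - g y * g y) * Ker s (x - y) :=
    ((h1'.sub h2').congr (fun y => by ring))
  have key : gradSq s ⇑g x
      = 2 * (g x * Lop s ⇑g x) - Lop s (fun z => g z * g z) x := by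
    have e1 : 2 * (g x * Lop s ⇑g x)
        = ∑' y : ℤ, (2 * g x) * ((g x - g y) * Ker s (x - y)) := by
      rw [tsum_mul_left]; unfold Lop; ring
    have e2 : Lop s (fun z => g z * g z) x
        = ∑' y : ℤ, (g x * g x - g y * g y) * Ker s (x - y) := rfl
    rw [e1, e2, ← Summable.tsum_sub (S1.mul_left (2 * g x)) S2]
    unfold gradSq
    congr 1
    funext y
    rw [ker_sub_symm s x y]
    ring
  rw [key]
  have hA1 : Lop s ⇑g x = (Aop hs g) x := (Aop_apply hs g x).symm
  have hA2 : Lop s (fun z => g z * g z) x = (Aop hs (mulCLM g g)) x := by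
    rw [Aop_apply hs (mulCLM g g) x]; rfl
  rw [hA1, hA2]
  show _ = ((2:ℝ) • mulCLM g (Aop hs g) - Aop hs (mulCLM g g)) x
  rw [lp.coeFn_sub, Pi.sub_apply, lp.coeFn_smul, Pi.smul_apply, smul_eq_mul, mulCLM_apply]

lemma exp_mul_apply (C D : E →L[ℝ] E) (v : E) :
    (C * D) v = C (D v) := rfl

/-- the semigroup commutes with its generator, applied form -/
lemma exp_gen_comm (t : ℝ) (v : E) :
    (NormedSpace.exp (t • Bop hs) * Bop hs) v = Bop hs (NormedSpace.exp (t • Bop hs) v) := by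
  have hcomm : Commute (Bop hs) (t • Bop hs) := (Commute.refl (Bop hs)).smul_right t
  have h := hcomm.exp_right.symm.eq
  rw [h]
  rfl

lemma hasDerivAt_semigroup (u : ℝ) (v : E) :
    HasDerivAt (fun w : ℝ => NormedSpace.exp (w • Bop hs) v)
      (Bop hs (NormedSpace.exp (u • Bop hs) v)) u := by
  have h1 : HasDerivAt (fun w : ℝ => NormedSpace.exp (w • Bop hs))
      (NormedSpace.exp (u • Bop hs) * Bop hs) u := hasDerivAt_exp_smul_const (Bop hs) u
  have h2 := (ContinuousLinearMap.apply ℝ E v).hasFDerivAt.comp_hasDerivAt u h1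
  have h3 : (ContinuousLinearMap.apply ℝ E v) ∘ (fun w : ℝ => NormedSpace.exp (w • Bop hs))
      = fun w : ℝ => NormedSpace.exp (w • Bop hs) v := rfl
  rw [h3] at h2
  have h4 : (ContinuousLinearMap.apply ℝ E v) (NormedSpace.exp (u • Bop hs) * Bop hs)
      = Bop hs (NormedSpace.exp (u • Bop hs) v) := exp_gen_comm hs u v
  rwa [h4] at h2

end Op

end HeatAux

open HeatAux in
/-- Variance identity for the heat semigroup:
`P_T(f²)(x) - (P_T f x)² = ∫₀^T P_u (|∇ P_{T-u} f|²)(x) du`. -/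
theorem heat_variance_identity (s : ℝ) (hs : s ∈ Set.Ioo (0 : ℝ) 1) (f : ℤ → ℝ)
    (hf : Summable f) (T : ℝ) (hT : 0 < T) (x : ℤ) :
    heat s T (fun y => f y ^ 2) x - (heat s T f x) ^ 2 =
      ∫ u in (0 : ℝ)..T, heat s u (fun z => gradSq s (heat s (T - u) f) z) x := by
  classical
  have hfabs : Summable (fun y => |f y|) := hf.abs
  set fE : E := ⟨f, mem1_iff.mpr hfabs⟩ with hfEdef
  have hfE : ⇑fE = f := rfl
  set B : E →L[ℝ] E := Bop hs with hB
  set g : ℝ → E := fun u => NormedSpace.exp ((T - u) • B) fE with hgdef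
  set F : ℝ → ℝ := fun u => evCLM x (NormedSpace.exp (u • B) (mulCLM (g u) (g u))) with hFdef
  set F' : ℝ → ℝ := fun u => evCLM x (NormedSpace.exp (u • B) (gammaE hs (g u))) with hF'def
  -- derivative of g
  have hg : ∀ u : ℝ, HasDerivAt g (Aop hs (g u)) u := by
    intro u
    have h1 : HasDerivAt (fun w : ℝ => T - w) (-1 : ℝ) u := (hasDerivAt_id u).const_sub T
    have h2 : HasDerivAt (fun w : ℝ => NormedSpace.exp (w • B) fE)
        (B (NormedSpace.exp ((T - u) • B) fE)) (T - u) := hasDerivAt_semigroup hs (T - u) fE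
    have h3 := h2.scomp u h1
    have h4 : ((-1 : ℝ) • (B (NormedSpace.exp ((T - u) • B) fE))) = Aop hs (g u) := by
      rw [hB, hgdef]
      show (-1 : ℝ) • ((-(Aop hs)) (NormedSpace.exp ((T - u) • Bop hs) fE)) = _
      rw [ContinuousLinearMap.neg_apply]
      simp
      rfl
    rw [h4] at h3
    exact h3
  -- derivative of the squared term
  have hm : ∀ u : ℝ, HasDerivAt (fun w => mulCLM (g w) (g w))
      (mulCLM (Aop hs (g u)) (g u) + mulCLM (g u) (Aop hs (g u))) u := by
    intro u
    have hc : HasDerivAt (fun w : ℝ => mulCLM (g w)) (mulCLM (Aop hs (g u))) u :=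
      mulCLM.hasFDerivAt.comp_hasDerivAt u (hg u)
    exact hc.clm_apply (hg u)
  -- derivative of F
  have hFderiv : ∀ u : ℝ, HasDerivAt F (F' u) u := by
    intro u
    have hc : HasDerivAt (fun w : ℝ => NormedSpace.exp (w • B))
        (NormedSpace.exp (u • B) * B) u := hasDerivAt_exp_smul_const B u
    have h5 := hc.clm_apply (hm u)
    have h6 := (evCLM x).hasFDerivAt.comp_hasDerivAt u h5
    have hident : evCLM x ((NormedSpace.exp (u • B) * B) (mulCLM (g u) (g u))
        + NormedSpace.exp (u • B) (mulCLM (Aop hs (g u)) (g u) + mulCLM (g u) (Aop hs (g u))))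
        = F' u := by
      rw [hB, exp_mul_apply hs (NormedSpace.exp (u • Bop hs)) (Bop hs) (mulCLM (g u) (g u)),
        ← map_add (NormedSpace.exp (u • Bop hs))]
      have hkey : Bop hs (mulCLM (g u) (g u))
          + (mulCLM (Aop hs (g u)) (g u) + mulCLM (g u) (Aop hs (g u)))
          = gammaE hs (g u) := by
        rw [mulCLM_comm (Aop hs (g u)) (g u)]
        show (-(Aop hs)) (mulCLM (g u) (g u)) + _ = _
        rw [ContinuousLinearMap.neg_apply]
        unfold gammaE
        rw [two_smul]
        abel
      rw [hkey]
    rw [← hident]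
    exact h6
  -- continuity of F'
  letI : NormedAlgebra ℚ (E →L[ℝ] E) := NormedAlgebra.restrictScalars ℚ ℝ (E →L[ℝ] E)
  have hcont_exp : Continuous (fun u : ℝ => NormedSpace.exp (u • B)) :=
    NormedSpace.exp_continuous.comp (continuous_id.smul continuous_const)
  have hcont_g : Continuous g := by
    rw [hgdef]
    exact (NormedSpace.exp_continuous.comp
      ((continuous_const.sub continuous_id).smul continuous_const)).clm_apply continuous_const
  have hcont_gamma : Continuous (fun u => gammaE hs (g u)) := by
    have c1 : Continuous (fun u => mulCLM (g u)) := mulCLM.continuous.comp hcont_g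
    have c2 : Continuous (fun u => Aop hs (g u)) := (Aop hs).continuous.comp hcont_g
    have c3 := c1.clm_apply c2
    have c4 := c1.clm_apply hcont_g
    show Continuous (fun u => (2:ℝ) • mulCLM (g u) (Aop hs (g u)) - Aop hs (mulCLM (g u) (g u)))
    exact ((continuous_const (y := (2:ℝ))).smul c3).sub ((Aop hs).continuous.comp c4)
  have hcontF' : Continuous F' :=
    (evCLM x).continuous.comp (hcont_exp.clm_apply hcont_gamma)
  -- fundamental theorem of calculus
  have hFTC : ∫ u in (0:ℝ)..T, F' u = F T - F 0 :=
    intervalIntegral.integral_eq_sub_of_hasDerivAt (fun u _ => hFderiv u)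
      (hcontF'.intervalIntegrable 0 T)
  -- identify the integrand
  have hgco : ∀ u : ℝ, ⇑(g u) = heat s (T - u) f := by
    intro u
    funext z
    exact (heat_eq hs (T - u) fE z).symm
  have hint : ∀ u : ℝ, heat s u (fun z => gradSq s (heat s (T - u) f) z) x = F' u := by
    intro u
    have h1 : (fun z => gradSq s (heat s (T - u) f) z) = ⇑(gammaE hs (g u)) := by
      funext z
      rw [← hgco u]
      exact gradSq_eq hs (g u) z
    rw [h1, heat_eq hs u (gammaE hs (g u)) x]
    rfl
  -- identify the endpoints
  have hgT : g T = fE := by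
    rw [hgdef]
    simp only [sub_self, zero_smul, NormedSpace.exp_zero, ContinuousLinearMap.one_apply]
  have hsq : (fun y => f y ^ 2) = ⇑(mulCLM fE fE) := by
    funext y
    rw [mulCLM_apply]
    show f y ^ 2 = f y * f y
    ring
  have hFT : F T = heat s T (fun y => f y ^ 2) x := by
    rw [hFdef]
    simp only [hgT]
    rw [hsq, heat_eq hs T (mulCLM fE fE) x]
    rfl
  have hg0 : ∀ z : ℤ, (g 0) z = heat s T f z := by
    intro z
    rw [hgco 0, sub_zero]
  have hF0 : F 0 = (heat s T f x) ^ 2 := by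
    rw [hFdef]
    simp only [zero_smul, NormedSpace.exp_zero, ContinuousLinearMap.one_apply]
    have : evCLM x (mulCLM (g 0) (g 0)) = (g 0) x * (g 0) x := rfl
    rw [this, hg0 x]
    ring
  rw [← hFT, ← hF0, ← hFTC]
  exact (intervalIntegral.integral_congr (fun u _ => hint u)).symm
end
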